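/- arXiv:0710.0167 — 3 statements merged into one kernel-verified Lean document; each statement's English description precedes it below -/
import Mathlib

section
/- Let W be a Coxeter group, J, K ⊆ I subsets, and let w₀ be the minimal-length element of a double coset W_J · w · W_K. Then every element u of this double coset can be written as u = α · w₀ · β with α ∈ W_J, β ∈ W_K, and l(u) = l(α) + l(w₀) + l(β). -/
/-- The standard parabolic subgroup of a Coxeter group generated by the
simple reflections indexed by `J`. -/
def CoxeterSystem.parabolic {B W : Type*} [Group W] {M : CoxeterMatrix B}
    (cs : CoxeterSystem M W) (J : Set B) : Subgroup W :=
  Subgroup.closure (cs.simple '' J)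

open List
namespace DCAux
set_option linter.unusedSectionVars false
open scoped Classical
variable {B W : Type*} [Group W] {M : CoxeterMatrix B} (cs : CoxeterSystem M W)
local prefix:100 "s" => cs.simple
local prefix:100 "π" => cs.wordProd
local prefix:100 "ℓ" => cs.length


/-- multiplicative `(ZMod 2)`-valued functions -/
abbrev NN (W : Type*) := W → Multiplicative (ZMod 2)

lemma nn_mul_self (f : NN W) : f * f = 1 := by
  funext x
  show f x * f x = 1
  have : ∀ a : Multiplicative (ZMod 2), a * a = 1 := by decide
  exact this (f x)

/-- Conjugation action of `W` on `NN W`. -/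
def conjAct (w : W) : NN W ≃* NN W where
  toFun f := fun x => f (w⁻¹ * x * w)
  invFun f := fun x => f (w * x * w⁻¹)
  left_inv f := by funext x; group
  right_inv f := by funext x; group
  map_mul' f g := rfl

def actHom : W →* MulAut (NN W) where
  toFun := conjAct
  map_one' := by ext f x; simp [conjAct]
  map_mul' w v := by ext f x; simp [conjAct, mul_assoc]

open Classical in
noncomputable def delta (t : W) : NN W :=
  fun x => Multiplicative.ofAdd (if x = t then (1 : ZMod 2) else 0)

lemma delta_mul_self (t : W) : delta t * delta t = 1 := nn_mul_self _

lemma actHom_delta (w t : W) : (actHom w) (delta t) = delta (w * t * w⁻¹) := by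
  funext x
  show delta t (w⁻¹ * x * w) = delta (w * t * w⁻¹) x
  have h : (w⁻¹ * x * w = t) ↔ (x = w * t * w⁻¹) := by
    constructor
    · intro h; rw [← h]; group
    · intro h; rw [h]; group
  unfold delta
  split_ifs with h1 h2 h2 <;> first
    | rfl
    | (exact absurd (h.mp h1) h2)
    | (exact absurd (h.mpr h2) h1)


abbrev GG (W : Type*) [Group W] := NN W ⋊[(actHom : W →* MulAut (NN W))] W

noncomputable def gens (i : B) : GG W := ⟨delta (s i), s i⟩

lemma gg_ext {a b : GG W} (h1 : a.left = b.left) (h2 : a.right = b.right) : a = b := by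
  cases a; cases b; simp_all

lemma pow_formula (n : NN W) (w : W) (m : ℕ) :
    (⟨n, w⟩ : GG W) ^ m = ⟨∏ k ∈ Finset.range m, actHom (w ^ k) n, w ^ m⟩ := by
  induction m with
  | zero => refine gg_ext ?_ ?_ <;> simp
  | succ m ih =>
    rw [pow_succ, ih]
    refine gg_ext ?_ ?_
    · rw [SemidirectProduct.mul_left]
      show (∏ k ∈ Finset.range m, actHom (w ^ k) n) * actHom (w ^ m) n
        = ∏ k ∈ Finset.range (m + 1), actHom (w ^ k) n
      rw [Finset.prod_range_succ]
    · rw [SemidirectProduct.mul_right]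
      show w ^ m * w = w ^ (m + 1)
      rw [pow_succ]

lemma prod_pair {Mo : Type*} [CommMonoid Mo] (h : ℕ → Mo) (m : ℕ) :
    ∏ k ∈ Finset.range m, (h (2 * k) * h (2 * k + 1)) = ∏ l ∈ Finset.range (2 * m), h l := by
  induction m with
  | zero => simp
  | succ m ih =>
    rw [Finset.prod_range_succ, ih, show 2 * (m + 1) = (2 * m + 1) + 1 by ring,
      Finset.prod_range_succ, Finset.prod_range_succ, mul_assoc]

lemma gens_liftable : M.IsLiftable (gens cs) := by
  intro i j
  set m := M i j with hm
  set c := s i * s j with hcdef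
  have hc : c ^ m = 1 := cs.simple_mul_simple_pow i j
  have hkey : ∀ k : ℕ, c ^ k * s i = s i * (c⁻¹) ^ k := by
    intro k
    induction k with
    | zero => simp
    | succ k ih =>
      have h1 : c * s i = s i * c⁻¹ := by
        rw [hcdef, mul_inv_rev, cs.inv_simple, cs.inv_simple]
        group
      calc c ^ (k + 1) * s i = c ^ k * (c * s i) := by rw [pow_succ']; group
        _ = (c ^ k * s i) * c⁻¹ := by rw [h1]; group
        _ = s i * (c⁻¹) ^ k * c⁻¹ := by rw [ih]
        _ = s i * (c⁻¹) ^ (k + 1) := by rw [pow_succ]; group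
  set h : ℕ → NN W := fun l => delta (s i * (c⁻¹) ^ l) with hh
  have ha : ∀ k : ℕ, c ^ k * s i * (c ^ k)⁻¹ = s i * (c⁻¹) ^ (2 * k) := by
    intro k
    rw [hkey k, inv_pow, show 2 * k = k + k by ring, pow_add]
    group
  have hb : ∀ k : ℕ, c ^ k * (s i * s j * s i) * (c ^ k)⁻¹ = s i * (c⁻¹) ^ (2 * k + 1) := by
    intro k
    have h2 : s i * s j * s i = c * s i := by rw [hcdef]
    rw [h2, show c ^ k * (c * s i) = c ^ (k + 1) * s i by rw [pow_succ']; group,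
      hkey (k + 1), inv_pow, show 2 * k + 1 = (k + 1) + k by ring, pow_add]
    group
  have hmul : gens cs i * gens cs j
      = (⟨delta (s i) * delta (s i * s j * s i), c⟩ : GG W) := by
    refine gg_ext ?_ ?_
    · rw [SemidirectProduct.mul_left]
      show delta (s i) * actHom (s i) (delta (s j)) = _
      rw [actHom_delta, cs.inv_simple]
    · rfl
  rw [hmul, pow_formula]
  refine gg_ext ?_ ?_
  · show ∏ k ∈ Finset.range m, actHom (c ^ k) (delta (s i) * delta (s i * s j * s i)) = 1
    have step : ∀ k : ℕ, actHom (c ^ k) (delta (s i) * delta (s i * s j * s i))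
        = h (2 * k) * h (2 * k + 1) := by
      intro k
      rw [map_mul, actHom_delta, actHom_delta, ha k, hb k]
    rw [Finset.prod_congr rfl (fun k _ => step k), prod_pair, show 2 * m = m + m by ring,
      Finset.prod_range_add]
    have hper : ∀ l : ℕ, h (m + l) = h l := by
      intro l
      show delta (s i * (c⁻¹) ^ (m + l)) = delta (s i * (c⁻¹) ^ l)
      rw [pow_add, inv_pow, hc]
      group
    rw [Finset.prod_congr rfl (fun l _ => hper l), ← Finset.prod_mul_distrib]
    rw [Finset.prod_congr rfl (fun l _ => delta_mul_self (s i * (c⁻¹) ^ l)), Finset.prod_const_one]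
  · show c ^ m = 1
    exact hc
noncomputable def phi : W →* GG W := cs.lift ⟨gens cs, gens_liftable cs⟩

lemma phi_simple (i : B) : phi cs (s i) = gens cs i :=
  cs.lift_apply_simple (gens_liftable cs) i

lemma phi_right (w : W) : (phi cs w).right = w := by
  have h : (SemidirectProduct.rightHom.comp (phi cs)) = MonoidHom.id W := by
    apply cs.ext_simple
    intro i
    show SemidirectProduct.rightHom (phi cs (s i)) = s i
    rw [phi_simple]
    rfl
  exact DFunLike.congr_fun h w

lemma left_phi_count (ω : List B) (t : W) :
    (phi cs (π ω)).left t
      = Multiplicative.ofAdd ((List.count t (cs.leftInvSeq ω) : ZMod 2)) := by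
  classical
  induction ω generalizing t with
  | nil =>
    rw [cs.wordProd_nil, map_one]
    simp
  | cons i ω ih =>
    rw [cs.wordProd_cons, map_mul, phi_simple, SemidirectProduct.mul_left]
    have hlis : cs.leftInvSeq (i :: ω)
        = s i :: List.map (MulAut.conj (s i)) (cs.leftInvSeq ω) := rfl
    have hright : (gens cs i).right = s i := rfl
    rw [hright]
    have hact : (actHom (s i) ((phi cs (π ω)).left)) t
        = (phi cs (π ω)).left ((s i)⁻¹ * t * s i) := by
      simp only [actHom, conjAct, MonoidHom.coe_mk, OneHom.coe_mk, MulEquiv.coe_mk, Equiv.coe_fn_mk]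
    rw [cs.inv_simple] at hact
    show delta (s i) t * (actHom (s i) ((phi cs (π ω)).left)) t = _
    rw [hact, ih (s i * t * s i), hlis, List.count_cons]
    have hcm : List.count t (List.map (⇑(MulAut.conj (s i))) (cs.leftInvSeq ω))
        = List.count (s i * t * s i) (cs.leftInvSeq ω) := by
      have hfx : (MulAut.conj (s i)) (s i * t * s i) = t := by
        show s i * (s i * t * s i) * (s i)⁻¹ = t
        rw [cs.inv_simple, ← mul_assoc, ← mul_assoc, cs.simple_mul_simple_self, one_mul,
          mul_assoc, cs.simple_mul_simple_self, mul_one]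
      have h' := List.count_map_of_injective (cs.leftInvSeq ω) (⇑(MulAut.conj (s i)))
        (MulAut.conj (s i)).injective (s i * t * s i)
      rw [hfx] at h'
      exact h'
    rw [hcm]
    unfold delta
    rw [← ofAdd_add]
    congr 1
    by_cases ht : t = s i
    · subst ht
      simp
      ring
    · have ht' : ¬(s i = t) := fun h' => ht h'.symm
      simp [ht, ht']

lemma simple_mem_leftInvSeq_of_descent {ω : List B} {i : B} (h : ℓ (s i * π ω) < ℓ (π ω)) :
    s i ∈ cs.leftInvSeq ω := by
  classical
  obtain ⟨ρ, hρred, hρ⟩ := cs.exists_reduced_word' (s i * π ω)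
  have hw : π (i :: ρ) = π ω := by
    rw [cs.wordProd_cons, ← hρ, ← mul_assoc, cs.simple_mul_simple_self, one_mul]
  have h0 : List.count (s i) (cs.leftInvSeq ρ) = 0 := by
    by_contra hne
    have hmem : s i ∈ cs.leftInvSeq ρ := by
      rcases List.count_pos_iff.mp (Nat.pos_of_ne_zero hne) with h'
      exact h'
    have hinv := (cs.isLeftInversion_of_mem_leftInvSeq hρred hmem).2
    rw [← hρ] at hinv
    have hss : s i * (s i * π ω) = π ω := by
      rw [← mul_assoc, cs.simple_mul_simple_self, one_mul]
    rw [hss] at hinv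
    omega
  have e1 := left_phi_count cs ω (s i)
  have e2 := left_phi_count cs (i :: ρ) (s i)
  rw [hw, e1] at e2
  have hc2 : List.count (s i) (cs.leftInvSeq (i :: ρ)) = 1 := by
    have hlis : cs.leftInvSeq (i :: ρ)
        = s i :: List.map (MulAut.conj (s i)) (cs.leftInvSeq ρ) := rfl
    rw [hlis, List.count_cons]
    have : List.count (s i) (List.map (⇑(MulAut.conj (s i))) (cs.leftInvSeq ρ)) = 0 := by
      have hfx : (MulAut.conj (s i)) (s i) = s i := by
        show s i * s i * (s i)⁻¹ = s i
        rw [cs.simple_mul_simple_self, one_mul, cs.inv_simple]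
      have h' := List.count_map_of_injective (cs.leftInvSeq ρ) (⇑(MulAut.conj (s i)))
        (MulAut.conj (s i)).injective (s i)
      rw [hfx] at h'
      rw [h', h0]
    rw [this]
    simp
  rw [hc2] at e2
  have hzm : ((List.count (s i) (cs.leftInvSeq ω) : ZMod 2)) = 1 := by
    exact Multiplicative.ofAdd.injective e2
  by_contra hmem
  rw [List.count_eq_zero_of_not_mem hmem] at hzm
  simp at hzm

lemma left_exchange {ω : List B} {i : B} (h : ℓ (s i * π ω) < ℓ (π ω)) :
    ∃ j < ω.length, s i * π ω = π (ω.eraseIdx j) := by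
  have hmem := simple_mem_leftInvSeq_of_descent cs h
  obtain ⟨j, hj, hval⟩ := List.mem_iff_getElem.mp hmem
  refine ⟨j, by simpa using hj, ?_⟩
  rw [← cs.getD_leftInvSeq_mul_wordProd ω j]
  congr 1
  rw [List.getD_eq_getElem _ _ hj]
  exact hval.symm

lemma wordProd_mem_parabolic {P : Set B} {ω : List B} (hω : ∀ i ∈ ω, i ∈ P) :
    π ω ∈ cs.parabolic P := by
  induction ω with
  | nil => rw [cs.wordProd_nil]; exact one_mem _
  | cons i ω ih =>
    rw [cs.wordProd_cons]
    exact mul_mem (Subgroup.subset_closure ⟨i, hω i (List.mem_cons_self (a := i) (l := ω)), rfl⟩)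
      (ih fun j hj => hω j (List.mem_cons_of_mem _ hj))

lemma simple_mem_parabolic {P : Set B} {i : B} (hi : i ∈ P) : s i ∈ cs.parabolic P :=
  Subgroup.subset_closure ⟨i, hi, rfl⟩

lemma exists_word_of_mem_parabolic {P : Set B} {w : W} (hw : w ∈ cs.parabolic P) :
    ∃ ω : List B, (∀ i ∈ ω, i ∈ P) ∧ w = π ω := by
  refine Subgroup.closure_induction ?_ ?_ ?_ ?_ hw
  · rintro x ⟨i, hi, rfl⟩
    exact ⟨[i], by simpa using hi, by simp⟩
  · exact ⟨[], by simp, by simp⟩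
  · rintro x y hx hy ⟨ωx, hωx, rfl⟩ ⟨ωy, hωy, rfl⟩
    refine ⟨ωx ++ ωy, ?_, by rw [cs.wordProd_append]⟩
    intro i hi
    rcases List.mem_append.mp hi with h | h
    · exact hωx i h
    · exact hωy i h
  · rintro x hx ⟨ω, hω, rfl⟩
    exact ⟨ω.reverse, fun i hi => hω i (List.mem_reverse.mp hi), (cs.wordProd_reverse ω).symm⟩

lemma exists_reduced_word_subset {P : Set B} (ω : List B) (hω : ∀ i ∈ ω, i ∈ P) :
    ∃ σ : List B, (∀ i ∈ σ, i ∈ P) ∧ cs.IsReduced σ ∧ π σ = π ω := by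
  induction ω with
  | nil =>
    refine ⟨[], by simp, ?_, rfl⟩
    show ℓ (π ([] : List B)) = ([] : List B).length
    simp
  | cons i ω ih =>
    obtain ⟨σ₁, hσ₁P, hσ₁red, hσ₁⟩ := ih (fun j hj => hω j (List.mem_cons_of_mem _ hj))
    have hiP : i ∈ P := hω i (List.mem_cons_self (a := i) (l := ω))
    have hσ₁len : σ₁.length = ℓ (π ω) := by rw [← hσ₁]; exact hσ₁red.symm
    rcases cs.length_simple_mul (π ω) i with hup | hdown
    · refine ⟨i :: σ₁, ?_, ?_, ?_⟩
      · intro x hx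
        rcases List.mem_cons.mp hx with h | h
        · exact h ▸ hiP
        · exact hσ₁P x h
      · show ℓ (π (i :: σ₁)) = (i :: σ₁).length
        rw [cs.wordProd_cons, hσ₁, hup]
        simp [hσ₁len]
      · rw [cs.wordProd_cons, cs.wordProd_cons, hσ₁]
    · have hlt : ℓ (s i * π σ₁) < ℓ (π σ₁) := by rw [hσ₁]; omega
      obtain ⟨j, hj, heq⟩ := left_exchange cs hlt
      refine ⟨σ₁.eraseIdx j, ?_, ?_, ?_⟩
      · intro x hx
        exact hσ₁P x ((List.eraseIdx_sublist σ₁ j).subset hx)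
      · show ℓ (π (σ₁.eraseIdx j)) = (σ₁.eraseIdx j).length
        rw [← heq, hσ₁]
        rw [List.length_eraseIdx]
        simp only [hj, if_pos]
        omega
      · rw [← heq, hσ₁, cs.wordProd_cons]

lemma exists_leftDescent_parabolic {P : Set B} {w : W} (hw : w ∈ cs.parabolic P)
    (hne : w ≠ 1) : ∃ i ∈ P, cs.IsLeftDescent w i := by
  obtain ⟨ω, hωP, rfl⟩ := exists_word_of_mem_parabolic cs hw
  obtain ⟨σ, hσP, hσred, hσ⟩ := exists_reduced_word_subset cs ω hωP
  cases hσc : σ with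
  | nil =>
    exfalso
    apply hne
    rw [← hσ, hσc, cs.wordProd_nil]
  | cons i σ' =>
    refine ⟨i, hσP i (by rw [hσc]; exact List.mem_cons_self (a := i) (l := σ')), ?_⟩
    show ℓ (s i * π ω) < ℓ (π ω)
    have h1 : s i * π ω = π σ' := by
      rw [← hσ, hσc, cs.wordProd_cons, ← mul_assoc, cs.simple_mul_simple_self, one_mul]
    have h2 : ℓ (π ω) = σ.length := by rw [← hσ]; exact hσred
    calc ℓ (s i * π ω) = ℓ (π σ') := by rw [h1]
      _ ≤ σ'.length := cs.length_wordProd_le σ'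
      _ < σ.length := by rw [hσc]; simp
      _ = ℓ (π ω) := h2.symm

lemma exists_rightDescent_parabolic {P : Set B} {w : W} (hw : w ∈ cs.parabolic P)
    (hne : w ≠ 1) : ∃ i ∈ P, cs.IsRightDescent w i := by
  obtain ⟨i, hiP, hd⟩ := exists_leftDescent_parabolic cs (inv_mem hw) (by simpa using hne)
  exact ⟨i, hiP, (cs.isLeftDescent_inv_iff).mp hd⟩

lemma exists_min_coset (u : W) (P : Set B) :
    ∃ b₀ ∈ cs.parabolic P, ∀ b ∈ cs.parabolic P, ℓ (u * b₀) ≤ ℓ (u * b) := by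
  classical
  have hex : ∃ n, ∃ b ∈ cs.parabolic P, ℓ (u * b) = n := ⟨ℓ (u * 1), 1, one_mem _, rfl⟩
  obtain ⟨b₀, hb₀, hval⟩ := Nat.find_spec hex
  refine ⟨b₀, hb₀, fun b hb => ?_⟩
  rw [hval]
  exact Nat.find_le ⟨b, hb, rfl⟩

lemma length_mul_of_min {P : Set B} {u₀ : W}
    (hmin : ∀ c ∈ cs.parabolic P, ℓ u₀ ≤ ℓ (u₀ * c)) :
    ∀ b ∈ cs.parabolic P, ℓ (u₀ * b) = ℓ u₀ + ℓ b := by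
  suffices h : ∀ n, ∀ b ∈ cs.parabolic P, ℓ b ≤ n → ℓ (u₀ * b) = ℓ u₀ + ℓ b by
    exact fun b hb => h (ℓ b) b hb le_rfl
  intro n
  induction n with
  | zero =>
    intro b hb hlb
    have : b = 1 := cs.length_eq_zero_iff.mp (Nat.le_zero.mp hlb)
    subst this
    simp
  | succ n ih =>
    intro b hb hlb
    by_cases hb1 : b = 1
    · subst hb1; simp
    obtain ⟨k, hkP, hk⟩ := exists_rightDescent_parabolic cs hb hb1
    obtain ⟨b', hb'def⟩ : ∃ x, x = b * s k := ⟨_, rfl⟩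
    have hb' : b' ∈ cs.parabolic P := by
      rw [hb'def]; exact mul_mem hb (simple_mem_parabolic cs hkP)
    have hlb' : ℓ b' + 1 = ℓ b := by
      rw [hb'def]; exact (cs.isRightDescent_iff).mp hk
    have hbb' : b = b' * s k := by
      rw [hb'def, mul_assoc, cs.simple_mul_simple_self, mul_one]
    have ihb' : ℓ (u₀ * b') = ℓ u₀ + ℓ b' := ih b' hb' (by omega)
    rcases cs.length_mul_simple (u₀ * b') k with hup | hdn
    · have hrw : u₀ * b = (u₀ * b') * s k := by rw [hbb']; group
      rw [hrw, hup, ihb']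
      omega
    · exfalso
      -- ℓ (u₀ * b' * s k) + 1 = ℓ (u₀ * b')
      obtain ⟨σ₀, hσ₀red, hσ₀⟩ := cs.exists_reduced_word' u₀⁻¹
      obtain ⟨τω, hτωP, hτω⟩ := exists_word_of_mem_parabolic cs (inv_mem hb' : b'⁻¹ ∈ _)
      obtain ⟨τ, hτP, hτred, hτ⟩ := exists_reduced_word_subset cs τω hτωP
      have hτval : π τ = b'⁻¹ := by rw [hτ, ← hτω]
      have hword : π (τ ++ σ₀) = b'⁻¹ * u₀⁻¹ := by
        rw [cs.wordProd_append, hτval, ← hσ₀]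
      have hlen1 : ℓ (b'⁻¹ * u₀⁻¹) = ℓ (u₀ * b') := by
        rw [show b'⁻¹ * u₀⁻¹ = (u₀ * b')⁻¹ by group, cs.length_inv]
      have hltarget : ℓ (s k * π (τ ++ σ₀)) < ℓ (π (τ ++ σ₀)) := by
        rw [hword, hlen1]
        have : s k * (b'⁻¹ * u₀⁻¹) = (u₀ * b' * s k)⁻¹ := by
          rw [mul_inv_rev, mul_inv_rev, cs.inv_simple]
        rw [this, cs.length_inv]
        omega
      obtain ⟨j, hj, heq⟩ := left_exchange cs hltarget
      rw [hword] at heq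
      have hτlen : τ.length = ℓ b' := by
        have h' : ℓ (π τ) = τ.length := hτred
        rw [hτval] at h'
        rw [← h']
        exact cs.length_inv b'

      have hσ₀len : σ₀.length = ℓ u₀ := by
        have h' : ℓ (π σ₀) = σ₀.length := hσ₀red
        rw [← hσ₀, cs.length_inv] at h'
        exact h'.symm
      by_cases hjτ : j < τ.length
      · rw [List.eraseIdx_append_of_lt_length hjτ, cs.wordProd_append, ← hσ₀] at heq
        -- heq : s k * (b'⁻¹ * u₀⁻¹) = π (τ.eraseIdx j) * u₀⁻¹
        have heq2 : s k * b'⁻¹ = π (τ.eraseIdx j) := by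
          apply mul_right_cancel (b := u₀⁻¹)
          rw [mul_assoc, heq]
        have hbinv : b⁻¹ = s k * b'⁻¹ := by
          rw [hbb', mul_inv_rev, cs.inv_simple]
        have hlenb : ℓ b ≤ τ.length - 1 := by
          calc ℓ b = ℓ b⁻¹ := (cs.length_inv b).symm
            _ = ℓ (π (τ.eraseIdx j)) := by rw [hbinv, heq2]
            _ ≤ (τ.eraseIdx j).length := cs.length_wordProd_le _
            _ = τ.length - 1 := by rw [List.length_eraseIdx]; simp [hjτ]
        omega
      · push_neg at hjτ
        rw [List.eraseIdx_append_of_length_le hjτ, cs.wordProd_append, hτval] at heq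
        -- heq : s k * (b'⁻¹ * u₀⁻¹) = b'⁻¹ * π (σ₀.eraseIdx (j - τ.length))
        set y := π (σ₀.eraseIdx (j - τ.length)) with hy
        have hymem : u₀ * (b' * s k * b'⁻¹) = y⁻¹ := by
          have h' : (s k * (b'⁻¹ * u₀⁻¹))⁻¹ = (b'⁻¹ * y)⁻¹ := by rw [heq]
          rw [mul_inv_rev, mul_inv_rev, cs.inv_simple, inv_inv, inv_inv, mul_inv_rev, inv_inv]
            at h'
          -- h' : u₀ * b' * s k = y⁻¹ * b'
          rw [show u₀ * (b' * s k * b'⁻¹) = (u₀ * b' * s k) * b'⁻¹ by group, h']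
          group
        have hcP : b' * s k * b'⁻¹ ∈ cs.parabolic P :=
          mul_mem (mul_mem hb' (simple_mem_parabolic cs hkP)) (inv_mem hb')
        have hjσ : j - τ.length < σ₀.length := by
          have : j < τ.length + σ₀.length := by simpa using hj
          omega
        have hylen : ℓ y ≤ ℓ u₀ - 1 := by
          calc ℓ y ≤ (σ₀.eraseIdx (j - τ.length)).length := cs.length_wordProd_le _
            _ = σ₀.length - 1 := by rw [List.length_eraseIdx]; simp [hjσ]
            _ = ℓ u₀ - 1 := by rw [hσ₀len]
        have hfin := hmin _ hcP
        rw [hymem, cs.length_inv] at hfin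
        have hσpos : 1 ≤ σ₀.length := by omega
        rw [hσ₀len] at hσpos
        omega

lemma rightfree_additivity {P : Set B} {u : W}
    (hfree : ∀ k ∈ P, ¬cs.IsRightDescent u k) :
    ∀ b ∈ cs.parabolic P, ℓ (u * b) = ℓ u + ℓ b := by
  obtain ⟨b₀, hb₀, hb₀min⟩ := exists_min_coset cs u P
  have hmin' : ∀ c ∈ cs.parabolic P, ℓ (u * b₀) ≤ ℓ ((u * b₀) * c) := by
    intro c hc
    rw [mul_assoc]
    exact hb₀min _ (mul_mem hb₀ hc)
  have hadd := length_mul_of_min cs hmin'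
  have hb₀1 : b₀ = 1 := by
    by_contra hb₀ne
    have hinvne : b₀⁻¹ ≠ 1 := by simpa using hb₀ne
    obtain ⟨k, hkP, hk⟩ := exists_rightDescent_parabolic cs (inv_mem hb₀) hinvne
    have h1 : ℓ (u * s k) = ℓ (u * b₀) + ℓ (b₀⁻¹ * s k) := by
      have : u * s k = (u * b₀) * (b₀⁻¹ * s k) := by group
      rw [this]
      exact hadd _ (mul_mem (inv_mem hb₀) (simple_mem_parabolic cs hkP))
    have h2 : ℓ u = ℓ (u * b₀) + ℓ b₀⁻¹ := by
      conv_lhs => rw [show u = (u * b₀) * b₀⁻¹ by group]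
      exact hadd _ (inv_mem hb₀)
    have h3 : ℓ (b₀⁻¹ * s k) + 1 = ℓ b₀⁻¹ := (cs.isRightDescent_iff).mp hk
    have hd : cs.IsRightDescent u k := by
      show ℓ (u * s k) < ℓ u
      omega
    exact hfree k hkP hd
  intro b hb
  have := hadd b hb
  rw [hb₀1] at this
  simpa using this

lemma leftfree_additivity {P : Set B} {u : W}
    (hfree : ∀ j ∈ P, ¬cs.IsLeftDescent u j) :
    ∀ a ∈ cs.parabolic P, ℓ (a * u) = ℓ a + ℓ u := by
  intro a ha
  have hfree' : ∀ j ∈ P, ¬cs.IsRightDescent u⁻¹ j := by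
    intro j hj hd
    exact hfree j hj ((cs.isRightDescent_inv_iff).mp hd)
  have := rightfree_additivity cs hfree' a⁻¹ (inv_mem ha)
  calc ℓ (a * u) = ℓ ((a * u)⁻¹) := (cs.length_inv _).symm
    _ = ℓ (u⁻¹ * a⁻¹) := by rw [mul_inv_rev]
    _ = ℓ u⁻¹ + ℓ a⁻¹ := this
    _ = ℓ a + ℓ u := by rw [cs.length_inv, cs.length_inv]; omega

lemma deodhar {P : Set B} {u : W} (hfree : ∀ k ∈ P, ¬cs.IsRightDescent u k) {j : B}
    (hnd : ¬cs.IsLeftDescent u j) :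
    (∀ k ∈ P, ¬cs.IsRightDescent (s j * u) k) ∨ (∃ k ∈ P, s j * u = u * s k) := by
  by_cases hc : ∃ k ∈ P, cs.IsRightDescent (s j * u) k
  · right
    obtain ⟨k, hkP, hk⟩ := hc
    refine ⟨k, hkP, ?_⟩
    have hlju : ℓ (s j * u) = ℓ u + 1 := (cs.not_isLeftDescent_iff).mp hnd
    have hlusk : ℓ (u * s k) = ℓ u + 1 := (cs.not_isRightDescent_iff).mp (hfree k hkP)
    have hl2 : ℓ (s j * u * s k) + 1 = ℓ (s j * u) := (cs.isRightDescent_iff).mp hk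
    obtain ⟨σ, hσred, hσ⟩ := cs.exists_reduced_word' u
    have hσlen : σ.length = ℓ u := by
      have h' : ℓ (π σ) = σ.length := hσred
      rw [← hσ] at h'
      omega
    have hword : π (σ ++ [k]) = u * s k := by
      rw [cs.wordProd_append, cs.wordProd_singleton, ← hσ]
    have hlt : ℓ (s j * π (σ ++ [k])) < ℓ (π (σ ++ [k])) := by
      rw [hword, ← mul_assoc]
      omega
    obtain ⟨j₀, hj₀, heq⟩ := left_exchange cs hlt
    rw [hword] at heq
    by_cases hj₀σ : j₀ < σ.length
    · exfalso
      rw [List.eraseIdx_append_of_lt_length hj₀σ, cs.wordProd_append,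
        cs.wordProd_singleton] at heq
      have heq2 : s j * u = π (σ.eraseIdx j₀) := by
        apply mul_right_cancel (b := s k)
        rw [mul_assoc, heq]
      have : ℓ (s j * u) ≤ σ.length - 1 := by
        calc ℓ (s j * u) = ℓ (π (σ.eraseIdx j₀)) := by rw [heq2]
          _ ≤ (σ.eraseIdx j₀).length := cs.length_wordProd_le _
          _ = σ.length - 1 := by rw [List.length_eraseIdx]; simp [hj₀σ]
      omega
    · push_neg at hj₀σ
      rw [List.eraseIdx_append_of_length_le hj₀σ] at heq
      have hidx : ([k].eraseIdx (j₀ - σ.length)) = [] := by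
        have : j₀ < σ.length + 1 := by simpa using hj₀
        have : j₀ - σ.length = 0 := by omega
        rw [this]
        rfl
      rw [hidx, List.append_nil, ← hσ] at heq
      -- heq : s j * (u * s k) = u
      have h3 : s j * u * s k = u := by rw [mul_assoc]; exact heq
      calc s j * u = s j * u * (s k * s k) := by rw [cs.simple_mul_simple_self, mul_one]
        _ = (s j * u * s k) * s k := by group
        _ = u * s k := by rw [h3]
  · left
    intro k hk hd
    exact hc ⟨k, hk, hd⟩

lemma descentfree_unique {J K : Set B} {u v : W}
    (huJ : ∀ j ∈ J, ¬cs.IsLeftDescent u j) (huK : ∀ k ∈ K, ¬cs.IsRightDescent u k)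
    (hvJ : ∀ j ∈ J, ¬cs.IsLeftDescent v j) (hvK : ∀ k ∈ K, ¬cs.IsRightDescent v k) :
    ∀ n (a b : W), a ∈ cs.parabolic J → b ∈ cs.parabolic K → v = a * u * b → ℓ a ≤ n →
      u = v := by
  intro n
  induction n with
  | zero =>
    intro a b ha hb heq hla
    have ha1 : a = 1 := cs.length_eq_zero_iff.mp (Nat.le_zero.mp hla)
    subst ha1
    rw [one_mul] at heq
    -- length identities
    have e1 : ℓ (u * b) = ℓ u + ℓ b := rightfree_additivity cs huK b hb
    have e2 : ℓ (v * b⁻¹) = ℓ v + ℓ b := by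
      rw [← cs.length_inv b]
      exact rightfree_additivity cs hvK b⁻¹ (inv_mem hb)
    have e3 : v * b⁻¹ = u := by rw [heq]; group
    rw [e3] at e2
    rw [← heq] at e1
    have hb0 : ℓ b = 0 := by omega
    have : b = 1 := cs.length_eq_zero_iff.mp hb0
    rw [this, mul_one] at heq
    exact heq.symm
  | succ n ih =>
    intro a b ha hb heq hla
    by_cases ha1 : a = 1
    · exact ih a b ha hb heq (by rw [ha1]; simp)
    obtain ⟨j, hjJ, hdj⟩ := exists_rightDescent_parabolic cs ha ha1
    obtain ⟨a', ha'def⟩ : ∃ x, x = a * s j := ⟨_, rfl⟩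
    have ha' : a' ∈ cs.parabolic J := by
      rw [ha'def]; exact mul_mem ha (simple_mem_parabolic cs hjJ)
    have hla' : ℓ a' + 1 = ℓ a := by
      rw [ha'def]; exact (cs.isRightDescent_iff).mp hdj
    have haa' : a = a' * s j := by
      rw [ha'def, mul_assoc, cs.simple_mul_simple_self, mul_one]
    rcases deodhar cs huK (huJ j hjJ) with hcase | hcase
    · exfalso
      -- s j * u is K-right-free
      have hl1 : ℓ (s j * u) = ℓ u + 1 := (cs.not_isLeftDescent_iff).mp (huJ j hjJ)
      have hAdd : ℓ ((s j * u) * b) = ℓ (s j * u) + ℓ b :=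
        rightfree_additivity cs hcase b hb
      have hv : v = a' * ((s j * u) * b) := by
        rw [heq, haa']; group
      have hbound : ℓ ((s j * u) * b) ≤ ℓ a' + ℓ v := by
        have h' : (s j * u) * b = a'⁻¹ * v := by rw [hv]; group
        rw [h', ← cs.length_inv a']
        exact cs.length_mul_le a'⁻¹ v
      -- length identities for this representation
      have e1 : ℓ (a * u) = ℓ a + ℓ u := leftfree_additivity cs huJ a ha
      have e2 : ℓ (v * b⁻¹) = ℓ v + ℓ b := by
        rw [← cs.length_inv b]
        exact rightfree_additivity cs hvK b⁻¹ (inv_mem hb)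
      have e3 : v * b⁻¹ = a * u := by rw [heq]; group
      rw [e3] at e2
      have e4 : ℓ (u * b) = ℓ u + ℓ b := rightfree_additivity cs huK b hb
      have e5 : ℓ (a⁻¹ * v) = ℓ a + ℓ v := by
        rw [← cs.length_inv a]
        exact leftfree_additivity cs hvJ a⁻¹ (inv_mem ha)
      have e6 : a⁻¹ * v = u * b := by rw [heq]; group
      rw [e6] at e5
      omega
    · obtain ⟨k, hkK, hk⟩ := hcase
      have heq' : v = a' * u * (s k * b) := by
        rw [heq, haa', mul_assoc (a' * s j) u b]
        rw [show a' * s j * (u * b) = a' * ((s j * u) * b) by group, hk]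
        group
      exact ih a' (s k * b) ha' (mul_mem (simple_mem_parabolic cs hkK) hb) heq' (by omega)

end DCAux

/-- If `w₀` is the minimal-length element of a double coset `W_J · w · W_K`, then every
element `u` of this double coset can be written as `u = α · w₀ · β` with `α ∈ W_J`,
`β ∈ W_K` and `l(u) = l(α) + l(w₀) + l(β)`. -/
theorem double_coset_reduced_decomposition
    {B W : Type*} [Group W] {M : CoxeterMatrix B} (cs : CoxeterSystem M W)
    (J K : Set B) (w w₀ : W)
    (hw₀ : ∃ a ∈ cs.parabolic J, ∃ b ∈ cs.parabolic K, w₀ = a * w * b)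
    (hmin : ∀ v : W, (∃ a ∈ cs.parabolic J, ∃ b ∈ cs.parabolic K, v = a * w * b) →
      cs.length w₀ ≤ cs.length v) :
    ∀ u : W, (∃ a ∈ cs.parabolic J, ∃ b ∈ cs.parabolic K, u = a * w * b) →
      ∃ α ∈ cs.parabolic J, ∃ β ∈ cs.parabolic K,
        u = α * w₀ * β ∧ cs.length u = cs.length α + cs.length w₀ + cs.length β := by
  classical
  obtain ⟨a₀, ha₀, b₀, hb₀, hw₀eq⟩ := hw₀
  have hw₀J : ∀ j ∈ J, ¬cs.IsLeftDescent w₀ j := by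
    intro j hjJ hd
    have hv : ∃ a ∈ cs.parabolic J, ∃ b ∈ cs.parabolic K, (cs.simple j * w₀) = a * w * b :=
      ⟨cs.simple j * a₀, mul_mem (DCAux.simple_mem_parabolic cs hjJ) ha₀, b₀, hb₀,
        by rw [hw₀eq]; group⟩
    have h1 := hmin _ hv
    have h2 : cs.length (cs.simple j * w₀) < cs.length w₀ := hd
    omega
  have hw₀K : ∀ k ∈ K, ¬cs.IsRightDescent w₀ k := by
    intro k hkK hd
    have hv : ∃ a ∈ cs.parabolic J, ∃ b ∈ cs.parabolic K, (w₀ * cs.simple k) = a * w * b :=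
      ⟨a₀, ha₀, b₀ * cs.simple k, mul_mem hb₀ (DCAux.simple_mem_parabolic cs hkK),
        by rw [hw₀eq]; group⟩
    have h1 := hmin _ hv
    have h2 : cs.length (w₀ * cs.simple k) < cs.length w₀ := hd
    omega
  suffices H : ∀ n, ∀ u : W, cs.length u ≤ n →
      (∃ a ∈ cs.parabolic J, ∃ b ∈ cs.parabolic K, u = a * w * b) →
      ∃ α ∈ cs.parabolic J, ∃ β ∈ cs.parabolic K,
        u = α * w₀ * β ∧ cs.length u = cs.length α + cs.length w₀ + cs.length β by
    intro u hu
    exact H (cs.length u) u le_rfl hu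
  intro n
  induction n using Nat.strong_induction_on with
  | _ n ih =>
  intro u hlu hu
  by_cases hJd : ∃ j ∈ J, cs.IsLeftDescent u j
  · obtain ⟨j, hjJ, hdj⟩ := hJd
    have hlen : cs.length (cs.simple j * u) + 1 = cs.length u := (cs.isLeftDescent_iff).mp hdj
    obtain ⟨a, ha, b, hb, hueq⟩ := hu
    have hu' : ∃ a' ∈ cs.parabolic J, ∃ b' ∈ cs.parabolic K, cs.simple j * u = a' * w * b' :=
      ⟨cs.simple j * a, mul_mem (DCAux.simple_mem_parabolic cs hjJ) ha, b, hb,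
        by rw [hueq]; group⟩
    have hnpos : 1 ≤ n := by omega
    obtain ⟨α', hα', β', hβ', heq', hlen'⟩ :=
      ih (n - 1) (by omega) (cs.simple j * u) (by omega) hu'
    refine ⟨cs.simple j * α', mul_mem (DCAux.simple_mem_parabolic cs hjJ) hα', β', hβ', ?_, ?_⟩
    · rw [show u = cs.simple j * (cs.simple j * u) by
        rw [← mul_assoc, cs.simple_mul_simple_self, one_mul], heq']
      group
    · have hup : cs.length (cs.simple j * α') = cs.length α' + 1 := by
        rcases cs.length_simple_mul α' j with h | h
        · exact h
        · exfalso
          have hb1 : cs.length u ≤ cs.length (cs.simple j * α') + cs.length w₀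
              + cs.length β' := by
            have e : u = (cs.simple j * α') * w₀ * β' := by
              rw [show u = cs.simple j * (cs.simple j * u) by
                rw [← mul_assoc, cs.simple_mul_simple_self, one_mul], heq']
              group
            calc cs.length u = cs.length ((cs.simple j * α') * w₀ * β') := by rw [← e]
              _ ≤ cs.length ((cs.simple j * α') * w₀) + cs.length β' := cs.length_mul_le _ _
              _ ≤ cs.length (cs.simple j * α') + cs.length w₀ + cs.length β' := by
                  have := cs.length_mul_le (cs.simple j * α') w₀
                  omega
          omega
      omega
  · by_cases hKd : ∃ k ∈ K, cs.IsRightDescent u k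
    · obtain ⟨k, hkK, hdk⟩ := hKd
      have hlen : cs.length (u * cs.simple k) + 1 = cs.length u := (cs.isRightDescent_iff).mp hdk
      obtain ⟨a, ha, b, hb, hueq⟩ := hu
      have hu' : ∃ a' ∈ cs.parabolic J, ∃ b' ∈ cs.parabolic K,
          u * cs.simple k = a' * w * b' :=
        ⟨a, ha, b * cs.simple k, mul_mem hb (DCAux.simple_mem_parabolic cs hkK),
          by rw [hueq]; group⟩
      obtain ⟨α', hα', β', hβ', heq', hlen'⟩ :=
        ih (n - 1) (by omega) (u * cs.simple k) (by omega) hu'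
      refine ⟨α', hα', β' * cs.simple k, mul_mem hβ' (DCAux.simple_mem_parabolic cs hkK),
        ?_, ?_⟩
      · rw [show u = (u * cs.simple k) * cs.simple k by
          rw [mul_assoc, cs.simple_mul_simple_self, mul_one], heq']
        group
      · have hup : cs.length (β' * cs.simple k) = cs.length β' + 1 := by
          rcases cs.length_mul_simple β' k with h | h
          · exact h
          · exfalso
            have hb1 : cs.length u ≤ cs.length α' + cs.length w₀
                + cs.length (β' * cs.simple k) := by
              have e : u = α' * w₀ * (β' * cs.simple k) := by
                rw [show u = (u * cs.simple k) * cs.simple k by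
                  rw [mul_assoc, cs.simple_mul_simple_self, mul_one], heq']
                group
              calc cs.length u = cs.length (α' * w₀ * (β' * cs.simple k)) := by rw [← e]
                _ ≤ cs.length (α' * w₀) + cs.length (β' * cs.simple k) := cs.length_mul_le _ _
                _ ≤ cs.length α' + cs.length w₀ + cs.length (β' * cs.simple k) := by
                    have := cs.length_mul_le α' w₀
                    omega
            omega
        omega
    · push_neg at hJd hKd
      obtain ⟨a, ha, b, hb, hueq⟩ := hu
      have hrep : w₀ = (a₀ * a⁻¹) * u * (b⁻¹ * b₀) := by
        rw [hw₀eq, hueq]; group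
      have huw₀ : u = w₀ :=
        DCAux.descentfree_unique cs hJd hKd hw₀J hw₀K (cs.length (a₀ * a⁻¹))
          (a₀ * a⁻¹) (b⁻¹ * b₀) (mul_mem ha₀ (inv_mem ha)) (mul_mem (inv_mem hb) hb₀)
          hrep le_rfl
      refine ⟨1, one_mem _, 1, one_mem _, by rw [huw₀]; group, ?_⟩
      rw [huw₀, cs.length_one]
      omega
end

section
/- For any element w of a Coxeter group W, the standard parabolic subgroup W_{I_w} generated by the descent set I_w = { i ∈ I : l(w · r_i) < l(w) } is a finite group. -/
noncomputable section
open scoped Classical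

namespace CoxeterSystem
open List CoxeterSystem

variable {B W : Type*} [Group W] {M : CoxeterMatrix B} (cs : CoxeterSystem M W)

local prefix:100 "s" => cs.simple
local prefix:100 "π" => cs.wordProd
local prefix:100 "ℓ" => cs.length

private lemma zmod2_add_self (x : ZMod 2) : x + x = 0 := by fin_cases x <;> decide

private lemma zmod2_cases (x : ZMod 2) : x = 0 ∨ x = 1 := by fin_cases x <;> [exact Or.inl rfl; exact Or.inr rfl]

private lemma conj_eq_iff (a x t : W) : a * t * a⁻¹ = x ↔ t = a⁻¹ * x * a := by
  constructor
  · intro h; rw [← h]; group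
  · intro h; rw [h]; group

/-- The function underlying Tits' reflection-parity permutation. -/
def sigmaFun (i : B) (p : W × ZMod 2) : W × ZMod 2 :=
  (s i * p.1 * (s i)⁻¹, p.2 + if p.1 = s i then 1 else 0)

lemma sigmaFun_involutive (i : B) : Function.Involutive (cs.sigmaFun i) := by
  intro p
  unfold sigmaFun
  ext
  · show (s i) * ((s i) * p.1 * (s i)⁻¹) * (s i)⁻¹ = p.1
    rw [show (s i) * ((s i) * p.1 * (s i)⁻¹) * (s i)⁻¹
        = ((s i) * (s i)) * p.1 * ((s i) * (s i))⁻¹ from by group]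
    simp
  · show p.2 + (if p.1 = s i then 1 else 0)
      + (if (s i) * p.1 * (s i)⁻¹ = s i then 1 else 0) = p.2
    have hc : ((s i) * p.1 * (s i)⁻¹ = s i) ↔ (p.1 = s i) := by
      rw [conj_eq_iff]
      constructor
      · intro h; rw [h]; simp
      · intro h; rw [h]; simp
    rw [if_congr hc rfl rfl, add_assoc]
    rcases em (p.1 = s i) with h | h <;> simp [h, zmod2_add_self]

/-- Tits' permutation of `W × ZMod 2` attached to a simple reflection. -/
def sigma (i : B) : Equiv.Perm (W × ZMod 2) :=
  Function.Involutive.toPerm _ (cs.sigmaFun_involutive i)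

lemma sigma_apply (i : B) (p : W × ZMod 2) :
    cs.sigma i p = ((s i) * p.1 * (s i)⁻¹, p.2 + if p.1 = s i then 1 else 0) := rfl

/-- The sequence of dihedral reflections. -/
def refN (i j : B) (r : ℕ) : W := ((s j) * (s i)) ^ r * (s j)

lemma conj_refN (i j : B) (r : ℕ) :
    ((s j) * (s i)) * cs.refN i j r * ((s i) * (s j)) = cs.refN i j (r + 2) := by
  unfold refN
  have e1 : (s j * s i) * ((s j * s i) ^ r * s j) * (s i * s j)
      = ((s j * s i) * (s j * s i) ^ r) * (s j * s i * s j) := by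
    simp only [mul_assoc]
  rw [e1, ← pow_succ']
  have e2 : (s j * s i) ^ (r + 1) * (s j * s i * s j)
      = ((s j * s i) ^ (r + 1) * (s j * s i)) * s j := by
    simp only [mul_assoc]
  rw [e2, ← pow_succ]

lemma conj_refN' (i j : B) (r : ℕ) :
    ((s i) * (s j))⁻¹ * cs.refN i j r * ((s i) * (s j)) = cs.refN i j (r + 2) := by
  rw [mul_inv_rev, inv_simple, inv_simple]
  rw [show s j * s i * cs.refN i j r * (s i * s j)
      = s j * s i * cs.refN i j r * s i * s j from by simp only [mul_assoc]] at *
  rw [← cs.conj_refN i j r]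
  simp only [mul_assoc]

lemma conj_refN_pow (i j : B) (r k : ℕ) :
    (((s i) * (s j)) ^ k)⁻¹ * cs.refN i j r * ((s i) * (s j)) ^ k = cs.refN i j (r + 2 * k) := by
  induction k generalizing r with
  | zero => simp
  | succ k ih =>
      have hp : ((s i) * (s j)) ^ (k + 1) = ((s i) * (s j)) * ((s i) * (s j)) ^ k := by
        rw [← pow_succ']
      rw [hp, mul_inv_rev]
      have e1 : (((s i) * (s j)) ^ k)⁻¹ * ((s i) * (s j))⁻¹ * cs.refN i j r
          * (((s i) * (s j)) * ((s i) * (s j)) ^ k)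
          = (((s i) * (s j)) ^ k)⁻¹ * (((s i) * (s j))⁻¹ * cs.refN i j r * ((s i) * (s j)))
            * ((s i) * (s j)) ^ k := by
        simp only [mul_assoc]
      rw [e1, cs.conj_refN' i j r, ih (r + 2)]
      congr 1
      omega
lemma sigma_mul_apply (i j : B) (t : W) (ε : ZMod 2) :
    (cs.sigma i * cs.sigma j) (t, ε) =
      (((s i) * (s j)) * t * ((s i) * (s j))⁻¹,
        ε + ((if t = cs.refN i j 0 then 1 else 0) + (if t = cs.refN i j 1 then 1 else 0))) := by
  rw [Equiv.Perm.mul_apply, cs.sigma_apply, cs.sigma_apply]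
  dsimp only
  ext
  · show (s i) * ((s j) * t * (s j)⁻¹) * (s i)⁻¹ = ((s i) * (s j)) * t * ((s i) * (s j))⁻¹
    group
  · show ε + (if t = s j then 1 else 0) + (if (s j) * t * (s j)⁻¹ = s i then 1 else 0)
      = ε + ((if t = cs.refN i j 0 then 1 else 0) + (if t = cs.refN i j 1 then 1 else 0))
    have h0 : cs.refN i j 0 = s j := by simp [refN]
    have h1 : ((s j) * t * (s j)⁻¹ = s i) ↔ (t = cs.refN i j 1) := by
      rw [conj_eq_iff]
      have : (s j)⁻¹ * (s i) * (s j) = cs.refN i j 1 := by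
        simp [refN]
      rw [this]
    rw [h0, if_congr h1 rfl rfl, add_assoc]

lemma sigma_mul_pow_apply (i j : B) (k : ℕ) (t : W) (ε : ZMod 2) :
    ((cs.sigma i * cs.sigma j) ^ k) (t, ε) =
      (((s i) * (s j)) ^ k * t * (((s i) * (s j)) ^ k)⁻¹,
        ε + ∑ r ∈ Finset.range (2 * k), (if t = cs.refN i j r then 1 else 0)) := by
  induction k generalizing ε with
  | zero => simp
  | succ k ih =>
      rw [pow_succ', Equiv.Perm.mul_apply, ih, cs.sigma_mul_apply]
      have hfst : (s i) * (s j) * ((s i * s j) ^ k * t * ((s i * s j) ^ k)⁻¹) * (s i * s j)⁻¹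
          = (s i * s j) ^ (k+1) * t * ((s i * s j) ^ (k+1))⁻¹ := by
        rw [pow_succ']; simp only [mul_inv_rev, mul_assoc]
      have hc : ∀ r : ℕ, ((s i * s j) ^ k * t * ((s i * s j) ^ k)⁻¹ = cs.refN i j r)
          ↔ (t = cs.refN i j (r + 2 * k)) := by
        intro r
        rw [conj_eq_iff, cs.conj_refN_pow i j r k]
      ext
      · exact hfst
      · show (ε + ∑ r ∈ Finset.range (2 * k), (if t = cs.refN i j r then 1 else 0))
            + ((if (s i * s j) ^ k * t * ((s i * s j) ^ k)⁻¹ = cs.refN i j 0 then 1 else 0)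
              + (if (s i * s j) ^ k * t * ((s i * s j) ^ k)⁻¹ = cs.refN i j 1 then 1 else 0))
          = ε + ∑ r ∈ Finset.range (2 * (k + 1)), (if t = cs.refN i j r then 1 else 0)
        rw [if_congr (hc 0) rfl rfl, if_congr (hc 1) rfl rfl]
        have h2 : 2 * (k + 1) = (2 * k) + 1 + 1 := by ring
        rw [h2, Finset.sum_range_succ, Finset.sum_range_succ,
          show (0 : ℕ) + 2 * k = 2 * k from by omega,
          show (1 : ℕ) + 2 * k = 2 * k + 1 from by omega]
        simp only [add_assoc]

lemma sigma_liftable : M.IsLiftable cs.sigma := by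
  intro i j
  apply Equiv.ext
  rintro ⟨t, ε⟩
  have hrel : ((s i) * (s j)) ^ M i j = 1 := cs.simple_mul_simple_pow i j
  have hrel' : ((s j) * (s i)) ^ M i j = 1 := cs.simple_mul_simple_pow' i j
  have hper : ∀ r : ℕ, cs.refN i j (r + M i j) = cs.refN i j r := by
    intro r
    unfold refN
    rw [pow_add, hrel', mul_one]
  have hsum : ∑ r ∈ Finset.range (2 * M i j), (if t = cs.refN i j r then (1 : ZMod 2) else 0)
      = 0 := by
    have h2 : 2 * M i j = M i j + M i j := by ring
    rw [h2, Finset.sum_range_add]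
    have : ∀ r : ℕ, (if t = cs.refN i j (M i j + r) then (1 : ZMod 2) else 0)
        = (if t = cs.refN i j r then (1 : ZMod 2) else 0) := by
      intro r
      rw [show M i j + r = r + M i j from by omega, hper r]
    simp only [this]
    rw [← Finset.sum_add_distrib]
    apply Finset.sum_eq_zero
    intro r _
    exact zmod2_add_self _
  rw [cs.sigma_mul_pow_apply i j (M i j) t ε, hrel, hsum]
  simp

/-- Tits' permutation representation used to count inversions mod 2. -/
def rho : W →* Equiv.Perm (W × ZMod 2) := cs.lift ⟨cs.sigma, cs.sigma_liftable⟩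

lemma rho_simple (i : B) : cs.rho (s i) = cs.sigma i := cs.lift_apply_simple cs.sigma_liftable i

/-- The parity of the number of occurrences of `t` in an inversion sequence of `w`. -/
def nu (w t : W) : ZMod 2 := ((cs.rho w) (t, 0)).2

lemma rho_wordProd (ω : List B) (t : W) (ε : ZMod 2) :
    cs.rho (π ω) (t, ε) = (π ω * t * (π ω)⁻¹, ε + ((cs.rightInvSeq ω).count t : ZMod 2)) := by
  induction ω generalizing t ε with
  | nil => simp
  | cons i ω ih =>
      rw [wordProd_cons, map_mul, Equiv.Perm.mul_apply, ih, cs.rho_simple, cs.sigma_apply]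
      have hris : cs.rightInvSeq (i :: ω) = ((π ω)⁻¹ * (s i) * (π ω)) :: cs.rightInvSeq ω := rfl
      ext
      · show (s i) * (π ω * t * (π ω)⁻¹) * (s i)⁻¹
          = (π (i :: ω)) * t * (π (i :: ω))⁻¹
        rw [wordProd_cons]; group
      · show (ε + ((cs.rightInvSeq ω).count t : ZMod 2))
            + (if π ω * t * (π ω)⁻¹ = s i then 1 else 0)
          = ε + ((cs.rightInvSeq (i :: ω)).count t : ZMod 2)
        rw [hris, List.count_cons]
        have hcond : (π ω * t * (π ω)⁻¹ = s i) ↔ (t = (π ω)⁻¹ * (s i) * (π ω)) := conj_eq_iff _ _ _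
        rw [if_congr hcond rfl rfl]
        push_cast
        rw [add_assoc]
        congr 1
        rcases em (t = (π ω)⁻¹ * (s i) * (π ω)) with h | h
        · simp [h]
        · have h' : ¬((π ω)⁻¹ * (s i) * (π ω) = t) := fun hh => h hh.symm
          simp [h, h']
lemma rho_apply (u t : W) (ε : ZMod 2) :
    cs.rho u (t, ε) = (u * t * u⁻¹, ε + cs.nu u t) := by
  obtain ⟨ω, rfl⟩ := cs.wordProd_surjective u
  rw [cs.rho_wordProd]
  unfold nu
  rw [cs.rho_wordProd]
  simp

lemma nu_eq_count (ω : List B) (t : W) :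
    cs.nu (π ω) t = ((cs.rightInvSeq ω).count t : ZMod 2) := by
  unfold nu
  rw [cs.rho_wordProd]
  simp

lemma nu_mul (a b t : W) : cs.nu (a * b) t = cs.nu b t + cs.nu a (b * t * b⁻¹) := by
  have h1 := cs.rho_apply (a * b) t 0
  have h2 : cs.rho (a * b) (t, 0)
      = ((a * b) * t * (a * b)⁻¹, (0 + cs.nu b t) + cs.nu a (b * t * b⁻¹)) := by
    rw [map_mul, Equiv.Perm.mul_apply, cs.rho_apply b t 0,
      cs.rho_apply a (b * t * b⁻¹) (0 + cs.nu b t)]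
    rw [show a * (b * t * b⁻¹) * a⁻¹ = (a * b) * t * (a * b)⁻¹ from by group]
  rw [h1] at h2
  have h3 := congrArg Prod.snd h2
  simpa using h3

lemma nu_one (t : W) : cs.nu 1 t = 0 := by
  unfold nu
  rw [map_one]
  rfl

lemma nu_inv (a t : W) : cs.nu a⁻¹ t = cs.nu a (a⁻¹ * t * a) := by
  have h := cs.nu_mul a a⁻¹ t
  rw [mul_inv_cancel, cs.nu_one, inv_inv] at h
  have h2 : ∀ x y : ZMod 2, 0 = x + y → x = y := by decide
  exact h2 _ _ h

lemma nu_simple (i : B) (t : W) : cs.nu (s i) t = if t = s i then 1 else 0 := by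
  have h : cs.nu (π [i]) t = ((cs.rightInvSeq [i]).count t : ZMod 2) := cs.nu_eq_count [i] t
  rw [cs.rightInvSeq_singleton] at h
  rw [show (π [i] : W) = s i from by simp] at h
  rw [h]
  rcases em (t = s i) with hh | hh
  · subst hh; simp
  · rw [List.count_eq_zero.mpr (by simp [hh])]
    simp [hh]

lemma nu_of_isRightDescent {u : W} {i : B} (h : cs.IsRightDescent u i) :
    cs.nu u (s i) = 1 := by
  obtain ⟨β, hlen, hprod⟩ := cs.exists_reduced_word (u * s i)
  have hword : u = π (β ++ [i]) := by
    rw [wordProd_append, ← hprod]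
    simp
  have hred : cs.IsReduced (β ++ [i]) := by
    unfold IsReduced
    rw [← hword, List.length_append, ← (show ℓ (π β) = β.length from hlen), ← hprod, List.length_singleton]
    have := (cs.isRightDescent_iff).mp h
    omega
  have hmem : (s i : W) ∈ cs.rightInvSeq (β ++ [i]) := by
    rw [← List.concat_eq_append, cs.rightInvSeq_concat]
    simp
  rw [hword, cs.nu_eq_count]
  rw [List.count_eq_one_of_mem (hred.nodup_rightInvSeq) hmem]
  simp

lemma nu_of_not_isRightDescent {u : W} {i : B} (h : ¬ cs.IsRightDescent u i) :
    cs.nu u (s i) = 0 := by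
  have hdesc : cs.IsRightDescent (u * s i) i := by
    by_contra hc
    exact h ((cs.isRightDescent_iff_not_isRightDescent_mul).mpr hc)
  have h1 : cs.nu (u * s i) (s i) = 1 := cs.nu_of_isRightDescent hdesc
  have h2 : cs.nu (u * s i) (s i) = cs.nu (s i) (s i) + cs.nu u (s i * s i * (s i)⁻¹) :=
    cs.nu_mul u (s i) (s i)
  rw [cs.nu_simple, if_pos rfl] at h2
  have h3 : (s i) * (s i) * (s i)⁻¹ = s i := by group
  rw [h3] at h2
  rw [h1] at h2
  have h4 : ∀ x : ZMod 2, (1 : ZMod 2) = 1 + x → x = 0 := by decide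
  exact h4 _ h2

lemma isRightDescent_iff_nu {u : W} {i : B} :
    cs.IsRightDescent u i ↔ cs.nu u (s i) = 1 := by
  constructor
  · exact cs.nu_of_isRightDescent
  · intro h
    by_contra hc
    rw [cs.nu_of_not_isRightDescent hc] at h
    exact absurd h (by decide)

lemma lt_of_nu_eq_one : ∀ (n : ℕ) (u t : W), ℓ u = n → cs.IsReflection t →
    cs.nu u t = 1 → ℓ (u * t) < ℓ u := by
  intro n
  induction n using Nat.strong_induction_on with
  | _ n ih =>
    intro u t hn ht hnu
    have hune : u ≠ 1 := by
      rintro rfl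
      rw [cs.nu_one] at hnu
      exact absurd hnu (by decide)
    obtain ⟨j, hj⟩ := cs.exists_rightDescent_of_ne_one hune
    rcases em (t = s j) with rfl | hne
    · exact hj
    · have hu' : u = (u * s j) * s j := by simp
      have hsplit : cs.nu u t = cs.nu (s j) t + cs.nu (u * s j) ((s j) * t * (s j)⁻¹) := by
        nth_rw 1 [hu']
        exact cs.nu_mul (u * s j) (s j) t
      rw [cs.nu_simple, if_neg hne, zero_add] at hsplit
      have hlen' : ℓ (u * s j) + 1 = ℓ u := (cs.isRightDescent_iff).mp hj
      have hrefl' : cs.IsReflection ((s j) * t * (s j)⁻¹) := ht.conj (s j)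
      have hlt : ℓ ((u * s j) * ((s j) * t * (s j)⁻¹)) < ℓ (u * s j) := by
        apply ih (ℓ (u * s j)) (by omega) _ _ rfl hrefl'
        rw [← hsplit]; exact hnu
      have heq : (u * s j) * ((s j) * t * (s j)⁻¹) = u * t * (s j)⁻¹ := by
        rw [show (u * s j) * ((s j) * t * (s j)⁻¹) = u * ((s j) * (s j)) * (t * (s j)⁻¹) from
          by group, cs.simple_mul_simple_self]
        group
      rw [heq] at hlt
      have : ℓ (u * t) ≤ ℓ (u * t * (s j)⁻¹) + 1 := by
        have h5 := cs.length_mul_le (u * t * (s j)⁻¹) (s j)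
        rw [cs.length_simple] at h5
        calc ℓ (u * t) = ℓ (u * t * (s j)⁻¹ * (s j)) := by
              rw [inv_simple]; simp
          _ ≤ _ := h5
      omega

lemma nu_self_of_isReflection {t : W} (ht : cs.IsReflection t) : cs.nu t t = 1 := by
  obtain ⟨v, j, rfl⟩ := ht
  set t := v * s j * v⁻¹ with hdef
  have h1 : cs.nu t t = cs.nu v⁻¹ t + cs.nu (v * s j) (v⁻¹ * t * (v⁻¹)⁻¹) := by
    nth_rw 1 [show t = (v * s j) * v⁻¹ from by rw [hdef]]
    exact cs.nu_mul (v * s j) v⁻¹ t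
  have h2 : v⁻¹ * t * (v⁻¹)⁻¹ = s j := by rw [hdef]; group
  have h3 : cs.nu v⁻¹ t = cs.nu v (s j) := by
    rw [cs.nu_inv v t]
    congr 1
    rw [hdef]; group
  have h4 : cs.nu (v * s j) (s j) = 1 + cs.nu v (s j) := by
    rw [cs.nu_mul v (s j) (s j), cs.nu_simple, if_pos rfl]
    congr 1
    group
  rw [h2, h3, h4] at h1
  rw [h1]
  have : ∀ x : ZMod 2, x + (1 + x) = 1 := by decide
  exact this _
lemma lt_iff_nu_eq_one {u t : W} (ht : cs.IsReflection t) :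
    ℓ (u * t) < ℓ u ↔ cs.nu u t = 1 := by
  constructor
  · intro hlt
    rcases zmod2_cases (cs.nu u t) with h0 | h1
    · exfalso
      have hsq : t * t = 1 := ht.mul_self
      have h1 : cs.nu (u * t) t = cs.nu t t + cs.nu u (t * t * t⁻¹) := cs.nu_mul u t t
      have h2 : t * t * t⁻¹ = t := by group
      rw [h2, cs.nu_self_of_isReflection ht, h0, add_zero] at h1
      have h3 : ℓ ((u * t) * t) < ℓ (u * t) :=
        cs.lt_of_nu_eq_one (ℓ (u * t)) (u * t) t rfl ht h1
      rw [mul_assoc, hsq, mul_one] at h3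
      omega
    · exact h1
  · exact fun h => cs.lt_of_nu_eq_one (ℓ u) u t rfl ht h

lemma nu_mem_rightInvSeq {u t : W} (ω : List B) (hω : π ω = u) (h : cs.nu u t = 1) :
    t ∈ cs.rightInvSeq ω := by
  subst hω
  rw [cs.nu_eq_count] at h
  by_contra hmem
  rw [List.count_eq_zero.mpr hmem] at h
  exact absurd h (by decide)

/-- The deletion step: a non-reduced word may be shortened by two letters,
keeping letters within the original word. -/
lemma deletion {ω : List B} (h : ¬ cs.IsReduced ω) :
    ∃ ω', π ω' = π ω ∧ ω'.length + 2 = ω.length ∧ ∀ i ∈ ω', i ∈ ω := by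
  classical
  have hωne : ω ≠ [] := by
    rintro rfl
    exact h (by simp [IsReduced])
  have hex : ∃ j, ¬ cs.IsReduced (ω.take (j + 1)) := by
    refine ⟨ω.length - 1, ?_⟩
    have : ω.length - 1 + 1 = ω.length := by
      have : 0 < ω.length := List.length_pos_iff.mpr hωne
      omega
    rw [this, List.take_length]
    exact h
  set j := Nat.find hex with hjdef
  have hj : ¬ cs.IsReduced (ω.take (j + 1)) := Nat.find_spec hex
  have hred : cs.IsReduced (ω.take j) := by
    rcases j with _ | j'
    · simp [IsReduced]
    · have := Nat.find_min hex (m := j') (by omega)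
      rw [not_not] at this
      exact this
  have hjlt : j < ω.length := by
    by_contra hge
    push_neg at hge
    rw [List.take_of_length_le hge] at hred
    exact h hred
  set v := π (ω.take j) with hvdef
  set i := ω.get ⟨j, hjlt⟩ with hidef
  have htake : ω.take (j + 1) = ω.take j ++ [i] := by
    rw [hidef]
    rw [List.take_succ, List.getElem?_eq_getElem hjlt]
    rfl
  have hlenv : ℓ v = j := by
    rw [hvdef]
    have := hred
    unfold IsReduced at this
    rw [this, List.length_take]
    omega
  have hvsi : π (ω.take (j + 1)) = v * s i := by
    rw [htake, wordProd_append]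
    simp [hvdef]
  have hdesc : cs.IsRightDescent v i := by
    have hne : ℓ (v * s i) ≠ j + 1 := by
      intro hc
      apply hj
      unfold IsReduced
      rw [hvsi, hc, List.length_take]
      omega
    rcases cs.length_mul_simple v i with h1 | h1
    · exact absurd (by omega : ℓ (v * (s i)) = j + 1) hne
    · unfold IsRightDescent
      omega
  have hnu : cs.nu v (s i) = 1 := cs.nu_of_isRightDescent hdesc
  have hmem : (s i : W) ∈ cs.rightInvSeq (ω.take j) := cs.nu_mem_rightInvSeq _ rfl hnu
  obtain ⟨k, hk, hkget⟩ := List.getElem_of_mem hmem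
  have hklt : k < j := by
    have := cs.length_rightInvSeq (ω.take j)
    rw [this, List.length_take] at hk
    omega
  have herase : v * s i = π ((ω.take j).eraseIdx k) := by
    have := cs.wordProd_mul_getD_rightInvSeq (ω.take j) k
    rw [List.getD_eq_getElem _ _ hk, hkget] at this
    rw [← this, hvdef]
  refine ⟨(ω.take j).eraseIdx k ++ ω.drop (j + 1), ?_, ?_, ?_⟩
  · rw [wordProd_append, ← herase, ← hvsi, ← wordProd_append, List.take_append_drop]
  · have he : ((ω.take j).eraseIdx k).length + 1 = (ω.take j).length :=
      List.length_eraseIdx_add_one (by rw [List.length_take]; omega)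
    rw [List.length_take] at he
    rw [List.length_append, List.length_drop]
    omega
  · intro b hb
    rcases List.mem_append.mp hb with hb | hb
    · exact List.take_subset j ω (List.eraseIdx_subset hb)
    · exact List.drop_subset _ ω hb

private lemma exists_reduced_subword_aux : ∀ (n : ℕ) (ω : List B), ω.length = n →
    ∃ ω', cs.IsReduced ω' ∧ π ω' = π ω ∧ ∀ i ∈ ω', i ∈ ω := by
  intro n
  induction n using Nat.strong_induction_on with
  | _ n ih =>
    intro ω hlen
    rcases em (cs.IsReduced ω) with hred | hred
    · exact ⟨ω, hred, rfl, fun i hi => hi⟩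
    · obtain ⟨ω₁, hprod, hlen₁, hsub⟩ := cs.deletion hred
      obtain ⟨ω', h1, h2, h3⟩ := ih ω₁.length (by omega) ω₁ rfl
      exact ⟨ω', h1, by rw [h2, hprod], fun i hi => hsub i (h3 i hi)⟩

lemma exists_reduced_subword (ω : List B) :
    ∃ ω', cs.IsReduced ω' ∧ π ω' = π ω ∧ ∀ i ∈ ω', i ∈ ω :=
  cs.exists_reduced_subword_aux ω.length ω rfl
variable (J : Set B)

lemma wordProd_mem_closure {ω : List B} (hω : ∀ i ∈ ω, i ∈ J) :
    π ω ∈ Subgroup.closure (cs.simple '' J) := by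
  induction ω with
  | nil => exact (by simp : (π [] : W) = 1) ▸ one_mem _
  | cons i ω ih =>
      rw [wordProd_cons]
      exact mul_mem (Subgroup.subset_closure ⟨i, hω i (by simp), rfl⟩)
        (ih (fun b hb => hω b (by simp [hb])))

lemma exists_word_of_mem_closure {u : W} (hu : u ∈ Subgroup.closure (cs.simple '' J)) :
    ∃ ω : List B, (∀ i ∈ ω, i ∈ J) ∧ π ω = u := by
  induction hu using Subgroup.closure_induction with
  | mem x hx =>
      obtain ⟨i, hi, rfl⟩ := hx
      exact ⟨[i], by simpa using hi, by simp⟩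
  | one => exact ⟨[], by simp, by simp⟩
  | mul a b _ _ iha ihb =>
      obtain ⟨ωa, ha1, ha2⟩ := iha
      obtain ⟨ωb, hb1, hb2⟩ := ihb
      exact ⟨ωa ++ ωb, fun i hi => by
        rcases List.mem_append.mp hi with h | h
        · exact ha1 i h
        · exact hb1 i h, by rw [wordProd_append, ha2, hb2]⟩
  | inv a _ iha =>
      obtain ⟨ωa, ha1, ha2⟩ := iha
      exact ⟨ωa.reverse, fun i hi => ha1 i (List.mem_reverse.mp hi),
        by rw [wordProd_reverse, ha2]⟩

lemma exists_reduced_word_of_mem_closure {u : W}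
    (hu : u ∈ Subgroup.closure (cs.simple '' J)) :
    ∃ ω : List B, (∀ i ∈ ω, i ∈ J) ∧ cs.IsReduced ω ∧ π ω = u := by
  obtain ⟨ω₀, h1, h2⟩ := cs.exists_word_of_mem_closure J hu
  obtain ⟨ω, hred, hprod, hsub⟩ := cs.exists_reduced_subword ω₀
  exact ⟨ω, fun i hi => h1 i (hsub i hi), hred, by rw [hprod, h2]⟩

/-- The key lemma: if every element of `J` is a right descent of `w`, then lengths are
subtractive on the parabolic subgroup generated by `J`. -/
lemma parabolic_length_add (w : W) (hdesc : ∀ i ∈ J, cs.IsRightDescent w i) :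
    ∀ (n : ℕ), (∀ u ∈ Subgroup.closure (cs.simple '' J), ℓ u = n →
        ℓ (w * u) + n = ℓ w) ∧
      (∀ u ∈ Subgroup.closure (cs.simple '' J), ℓ u = n → ∀ i ∈ J,
        ℓ (w * (s i * u)) + ℓ (s i * u) = ℓ w) := by
  intro n
  induction n using Nat.strong_induction_on with
  | _ n ih =>
    have hA : ∀ u ∈ Subgroup.closure (cs.simple '' J), ℓ u = n → ℓ (w * u) + n = ℓ w := by
      intro u hu hlen
      rcases n with _ | m
      · have : u = 1 := cs.length_eq_zero_iff.mp hlen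
        subst this
        simp
      · obtain ⟨ω, hsubJ, hred, hprod⟩ := cs.exists_reduced_word_of_mem_closure J hu
        have hlω : ω.length = m + 1 := by
          have := hred
          unfold IsReduced at this
          rw [hprod] at this
          omega
        rcases ω with _ | ⟨i, ω₁⟩
        · simp at hlω
        · have hi : i ∈ J := hsubJ i (by simp)
          have hω₁J : ∀ b ∈ ω₁, b ∈ J := fun b hb => hsubJ b (by simp [hb])
          have hred₁ : cs.IsReduced ω₁ := by
            have := hred.drop 1
            simpa using this
          have hu₁ : π ω₁ ∈ Subgroup.closure (cs.simple '' J) :=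
            cs.wordProd_mem_closure J hω₁J
          have hlen₁ : ℓ (π ω₁) = m := by
            have := hred₁
            unfold IsReduced at this
            rw [this]
            simpa using hlω
          have hB := (ih m (by omega)).2 (π ω₁) hu₁ hlen₁ i hi
          have hcons : (s i) * π ω₁ = u := by rw [← wordProd_cons, hprod]
          rw [hcons] at hB
          omega
    refine ⟨hA, ?_⟩
    intro u hu hlen i hi
    have hsiG : (s i : W) ∈ Subgroup.closure (cs.simple '' J) :=
      Subgroup.subset_closure ⟨i, hi, rfl⟩
    rcases cs.length_simple_mul u i with hup | hdown
    · -- ascent case : ℓ (s i * u) = n + 1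
      have hvn : ℓ (w * u) + n = ℓ w := hA u hu hlen
      set t := u⁻¹ * (s i) * u with htdef
      have hrefl : cs.IsReflection t := ⟨u⁻¹, i, by rw [htdef]; group⟩
      have h1 : cs.nu u⁻¹ (s i) = 0 := by
        apply cs.nu_of_not_isRightDescent
        unfold IsRightDescent
        have hinv : ℓ (u⁻¹ * s i) = ℓ (s i * u) := by
          rw [← cs.length_inv (u⁻¹ * s i)]
          congr 1
          rw [mul_inv_rev, inv_simple, inv_inv]
        rw [hinv, cs.length_inv u]
        omega
      have h2 : cs.nu u t = 0 := by
        have := cs.nu_inv u (s i)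
        rw [h1] at this
        rw [htdef, ← this]
      have h3 : cs.nu w (s i) = 1 := cs.nu_of_isRightDescent (hdesc i hi)
      have h4 : cs.nu (w * u) t = 1 := by
        rw [cs.nu_mul w u t, h2, zero_add]
        rw [show u * t * u⁻¹ = s i from by rw [htdef]; group]
        exact h3
      have h5 : ℓ ((w * u) * t) < ℓ (w * u) := (cs.lt_iff_nu_eq_one hrefl).mpr h4
      have h6 : (w * u) * t = w * ((s i) * u) := by rw [htdef]; group
      rw [h6] at h5
      have h7 : ℓ w ≤ ℓ (w * ((s i) * u)) + (n + 1) := by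
        have h8 : (w * ((s i) * u)) * (u⁻¹ * (s i)) = w := by
          rw [show (w * ((s i) * u)) * (u⁻¹ * (s i)) = w * (s i) * (u * u⁻¹) * (s i) from
            by group]
          simp
        have h9 := cs.length_mul_le (w * ((s i) * u)) (u⁻¹ * (s i))
        have hinv : ℓ (u⁻¹ * s i) = ℓ (s i * u) := by
          rw [← cs.length_inv (u⁻¹ * s i)]
          congr 1
          rw [mul_inv_rev, inv_simple, inv_inv]
        rw [h8, hinv, hup] at h9
        omega
      rw [hup]
      omega
    · -- descent case : ℓ (s i * u) + 1 = n
      have hmem : (s i) * u ∈ Subgroup.closure (cs.simple '' J) := mul_mem hsiG hu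
      have := (ih (ℓ ((s i) * u)) (by omega)).1 ((s i) * u) hmem rfl
      omega

end CoxeterSystem

private lemma finite_bounded_lists {α : Type*} {S : Set α} (hS : S.Finite) :
    ∀ n : ℕ, {l : List α | l.length ≤ n ∧ ∀ x ∈ l, x ∈ S}.Finite := by
  intro n
  induction n with
  | zero =>
      apply Set.Finite.subset (Set.finite_singleton ([] : List α))
      rintro l ⟨h1, _⟩
      simp [List.length_eq_zero_iff.mp (Nat.le_zero.mp h1)]
  | succ n ih =>
      apply Set.Finite.subset (Set.Finite.insert [] (Set.Finite.image2 List.cons hS ih))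
      rintro l ⟨h1, h2⟩
      rcases l with _ | ⟨a, l⟩
      · exact Set.mem_insert _ _
      · apply Set.mem_insert_iff.mpr
        right
        exact Set.mem_image2_of_mem (h2 a (by simp))
          ⟨by simpa using h1, fun x hx => h2 x (by simp [hx])⟩

/-- For any element `w` of a Coxeter group `W`, the standard parabolic subgroup generated by
the right descent set `I_w = { i : l(w · r_i) < l(w) }` is a finite group. -/
theorem descent_parabolic_finite
    {B W : Type*} [Group W] {M : CoxeterMatrix B} (cs : CoxeterSystem M W) (w : W) :
    Finite (cs.parabolic {i | cs.length (w * cs.simple i) < cs.length w}) := by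
  classical
  set J := {i | cs.length (w * cs.simple i) < cs.length w} with hJ
  have hdesc : ∀ i ∈ J, cs.IsRightDescent w i := fun i hi => hi
  have hbound : ∀ u ∈ Subgroup.closure (cs.simple '' J), cs.length u ≤ cs.length w := by
    intro u hu
    have := (cs.parabolic_length_add J w hdesc (cs.length u)).1 u hu rfl
    omega
  obtain ⟨α, hα1, hα2⟩ := cs.exists_reduced_word w
  have hSsub : cs.simple '' J ⊆ {t | t ∈ cs.rightInvSeq α} := by
    rintro t ⟨j, hj, rfl⟩
    have h1 : cs.nu w (cs.simple j) = 1 := cs.nu_of_isRightDescent (hdesc j hj)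
    exact cs.nu_mem_rightInvSeq α hα2.symm h1
  have hSfin : (cs.simple '' J).Finite := (List.finite_toSet _).subset hSsub
  have hGsub : ((cs.parabolic J : Subgroup W) : Set W) ⊆ (fun l : List W => l.prod) ''
      {l : List W | l.length ≤ cs.length w ∧ ∀ x ∈ l, x ∈ cs.simple '' J} := by
    intro u hu
    obtain ⟨ω, hsubJ, hred, hprod⟩ := cs.exists_reduced_word_of_mem_closure J hu
    refine ⟨List.map cs.simple ω, ⟨?_, ?_⟩, ?_⟩
    · rw [List.length_map]
      have h2 : cs.length u = ω.length := by
        rw [← hprod]; exact hred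
      rw [← h2]; exact hbound u hu
    · intro x hx
      obtain ⟨i, hi, rfl⟩ := List.mem_map.mp hx
      exact ⟨i, hsubJ i hi, rfl⟩
    · rw [← hprod]; rfl
  have hfin : ((cs.parabolic J : Subgroup W) : Set W).Finite :=
    Set.Finite.subset (Set.Finite.image _ (finite_bounded_lists hSfin (cs.length w))) hGsub
  exact hfin.to_subtype
end
end

section
/- The Tits cone Y = W · C of a Coxeter group acting on the dual of its Cartan algebra is a convex cone; in particular, Y is closed under addition and under multiplication by nonnegative scalars. -/
/-- The data of the standard representation of a Kac–Moody Weyl group attached to a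
(symmetrizable or not) generalized Cartan matrix: a real vector space `V` (playing the
role of `𝔥ℝ*`), simple roots `α i ∈ V`, coroot functionals `λ ↦ λ(h i)`, such that the
matrix `a i j = (α j)(h i)` is a generalized Cartan matrix. -/
structure GCMRep (I V : Type*) [AddCommGroup V] [Module ℝ V] where
  /-- the simple roots `α i ∈ 𝔥ℝ*` -/
  α : I → V
  /-- evaluation against the simple coroots: `coroot i λ = λ(h i)` -/
  coroot : I → V →ₗ[ℝ] ℝ
  indep : LinearIndependent ℝ α
  indepCoroot : LinearIndependent ℝ coroot
  diag : ∀ i, coroot i (α i) = 2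
  offdiag_nonpos : ∀ i j, i ≠ j → coroot i (α j) ≤ 0
  integral : ∀ i j, ∃ n : ℤ, coroot i (α j) = (n : ℝ)
  symm_zero : ∀ i j, coroot i (α j) = 0 → coroot j (α i) = 0

namespace GCMRep

variable {I V : Type*} [AddCommGroup V] [Module ℝ V] (s : GCMRep I V)

/-- The simple reflection `r i : λ ↦ λ - λ(h i) • α i` as a linear endomorphism. -/
def reflMap (i : I) : V →ₗ[ℝ] V :=
  LinearMap.id - LinearMap.smulRight (s.coroot i) (s.α i)

lemma reflMap_involutive (i : I) : Function.Involutive (s.reflMap i) := by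
  intro v
  have h2 := s.diag i
  simp only [reflMap, LinearMap.sub_apply, LinearMap.id_apply, LinearMap.smulRight_apply,
    map_sub, map_smul, smul_eq_mul, h2]
  module

/-- The simple reflection `r i` as a linear automorphism of `V`. -/
def reflE (i : I) : V ≃ₗ[ℝ] V :=
  LinearEquiv.ofInvolutive (s.reflMap i) (s.reflMap_involutive i)

/-- The Weyl group `W(A)` as the group of linear automorphisms of `V = 𝔥ℝ*` generated by
the simple reflections. -/
def weyl : Subgroup (V ≃ₗ[ℝ] V) :=
  Subgroup.closure (Set.range s.reflE)

/-- The (closed) dominant Weyl chamber `C = { λ : λ(h i) ≥ 0 for all i }`. -/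
def domChamber : Set V := {x | ∀ i, 0 ≤ s.coroot i x}

/-- The Tits cone `Y = W · C`. -/
def titsCone : Set V := {y | ∃ w ∈ s.weyl, ∃ x ∈ s.domChamber, y = w x}

end GCMRep


namespace GCMRep

variable {I V : Type*} [AddCommGroup V] [Module ℝ V] (s : GCMRep I V)

noncomputable section
open Classical

lemma reflE_apply (i : I) (v : V) : s.reflE i v = v - s.coroot i v • s.α i := rfl

/-- The entries of the generalized Cartan matrix -/
def Amat (i j : I) : ℝ := s.coroot i (s.α j)

def nmat (i j : I) : ℤ := (s.integral i j).choose

lemma A_eq_nmat (i j : I) : s.Amat i j = (s.nmat i j : ℝ) := (s.integral i j).choose_spec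

lemma A_diag (i : I) : s.Amat i i = 2 := s.diag i

lemma nmat_nonpos {i j : I} (h : i ≠ j) : s.nmat i j ≤ 0 := by
  have := s.offdiag_nonpos i j h
  rw [show s.coroot i (s.α j) = s.Amat i j from rfl, s.A_eq_nmat] at this
  exact_mod_cast this

/-- products of the off-diagonal entries -/
def pz (i j : I) : ℤ := s.nmat i j * s.nmat j i

lemma pz_symm (i j : I) : s.pz i j = s.pz j i := mul_comm _ _

lemma pz_nonneg {i j : I} (h : i ≠ j) : 0 ≤ s.pz i j := by
  have h1 := s.nmat_nonpos h
  have h2 := s.nmat_nonpos h.symm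
  have := mul_nonneg (neg_nonneg.2 h1) (neg_nonneg.2 h2)
  simpa [pz] using this

/-- the Coxeter matrix entry attached to an integer product -/
def mOf (p : ℤ) : ℕ := if p = 0 then 2 else if p = 1 then 3 else if p = 2 then 4
  else if p = 3 then 6 else 0

lemma mOf_ne_one (p : ℤ) : mOf p ≠ 1 := by unfold mOf; split_ifs <;> simp

/-- The Coxeter matrix of the GCM. -/
def cox : CoxeterMatrix I where
  M := Matrix.of fun i j => if i = j then 1 else mOf (s.pz i j)
  isSymm := by
    ext i j
    simp only [Matrix.transpose_apply, Matrix.of_apply]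
    rcases eq_or_ne i j with rfl | h
    · rfl
    · rw [if_neg h.symm, if_neg h, s.pz_symm]
  diagonal i := by simp
  off_diagonal i j h := by simpa [Matrix.of_apply, h] using mOf_ne_one (s.pz i j)

lemma cox_apply_ne {i j : I} (h : i ≠ j) : s.cox i j = mOf (s.pz i j) := by
  show (if i = j then 1 else mOf (s.pz i j)) = _
  rw [if_neg h]

private lemma intpair {P x y : ℤ} (hP : P = 1 ∨ P = 2 ∨ P = 3) (hx : x ≤ 0) (hy : y ≤ 0)
    (h : x * y = P) : (x = -1 ∧ y = -P) ∨ (x = -P ∧ y = -1) := by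
  have hxn : x < 0 := by
    rcases eq_or_lt_of_le hx with rfl | h' <;> [skip; exact h']
    exfalso; rcases hP with rfl | rfl | rfl <;> simp at h
  have hyn : y < 0 := by
    rcases eq_or_lt_of_le hy with rfl | h' <;> [skip; exact h']
    exfalso; rcases hP with rfl | rfl | rfl <;> simp at h
  have hxP : -P ≤ x := by nlinarith
  have hPle : (1:ℤ) ≤ P := by rcases hP with rfl | rfl | rfl <;> norm_num
  have hP3 : P ≤ 3 := by rcases hP with rfl | rfl | rfl <;> norm_num
  have hx3 : -3 ≤ x := by omega
  interval_cases x <;> rcases hP with rfl | rfl | rfl <;> omega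

/-- The possible configurations of a pair of off-diagonal entries. -/
lemma offdiag_cases {i j : I} (h : i ≠ j) :
    (s.Amat i j = 0 ∧ s.Amat j i = 0 ∧ s.cox i j = 2) ∨
    (s.Amat i j = -1 ∧ s.Amat j i = -1 ∧ s.cox i j = 3) ∨
    ((s.Amat i j = -1 ∧ s.Amat j i = -2 ∨ s.Amat i j = -2 ∧ s.Amat j i = -1) ∧ s.cox i j = 4) ∨
    ((s.Amat i j = -1 ∧ s.Amat j i = -3 ∨ s.Amat i j = -3 ∧ s.Amat j i = -1) ∧ s.cox i j = 6) ∨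
    (4 ≤ s.pz i j ∧ s.cox i j = 0) := by
  have hij := s.nmat_nonpos h
  have hji := s.nmat_nonpos h.symm
  have hc := s.cox_apply_ne h
  have hAij := s.A_eq_nmat i j
  have hAji := s.A_eq_nmat j i
  have hpz : s.pz i j = s.nmat i j * s.nmat j i := rfl
  have hp0 := s.pz_nonneg h
  have hP : s.pz i j = 0 ∨ s.pz i j = 1 ∨ s.pz i j = 2 ∨ s.pz i j = 3 ∨ 4 ≤ s.pz i j := by omega
  rcases hP with hP | hP | hP | hP | hP
  · left
    have h0 : s.nmat i j = 0 ∨ s.nmat j i = 0 := mul_eq_zero.mp (hpz ▸ hP)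
    have key : s.Amat i j = 0 ∧ s.Amat j i = 0 := by
      rcases h0 with h0 | h0
      · have hz : s.Amat i j = 0 := by rw [hAij, h0]; norm_num
        exact ⟨hz, s.symm_zero i j hz⟩
      · have hz : s.Amat j i = 0 := by rw [hAji, h0]; norm_num
        exact ⟨s.symm_zero j i hz, hz⟩
    exact ⟨key.1, key.2, by rw [hc, hP]; decide⟩
  · right; left
    rcases intpair (Or.inl rfl) hij hji (hpz.symm.trans hP) with ⟨h1, h2⟩ | ⟨h1, h2⟩ <;>
      exact ⟨by rw [hAij, h1]; norm_num, by rw [hAji, h2]; norm_num, by rw [hc, hP]; decide⟩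
  · right; right; left
    rcases intpair (Or.inr (Or.inl rfl)) hij hji (hpz.symm.trans hP) with ⟨h1, h2⟩ | ⟨h1, h2⟩
    · exact ⟨Or.inl ⟨by rw [hAij, h1]; norm_num, by rw [hAji, h2]; norm_num⟩, by rw [hc, hP]; decide⟩
    · exact ⟨Or.inr ⟨by rw [hAij, h1]; norm_num, by rw [hAji, h2]; norm_num⟩, by rw [hc, hP]; decide⟩
  · right; right; right; left
    rcases intpair (Or.inr (Or.inr rfl)) hij hji (hpz.symm.trans hP) with ⟨h1, h2⟩ | ⟨h1, h2⟩
    · exact ⟨Or.inl ⟨by rw [hAij, h1]; norm_num, by rw [hAji, h2]; norm_num⟩, by rw [hc, hP]; decide⟩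
    · exact ⟨Or.inr ⟨by rw [hAij, h1]; norm_num, by rw [hAji, h2]; norm_num⟩, by rw [hc, hP]; decide⟩
  · right; right; right; right
    refine ⟨hP, ?_⟩
    rw [hc]
    unfold mOf
    split_ifs <;> omega

lemma cox_symm (i j : I) : s.cox i j = s.cox j i := s.cox.symmetric i j

end
end GCMRep


namespace GCMRep

variable {I V : Type*} [AddCommGroup V] [Module ℝ V] (s : GCMRep I V)

noncomputable section
open Classical

lemma mulE_apply (e1 e2 : V ≃ₗ[ℝ] V) (v : V) : (e1 * e2) v = e1 (e2 v) := rfl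
lemma oneE_apply (v : V) : (1 : V ≃ₗ[ℝ] V) v = v := rfl

lemma reflE_sq (i : I) : s.reflE i * s.reflE i = 1 :=
  LinearEquiv.ext fun v => s.reflMap_involutive i v

private lemma cancel_pow {G : Type*} [Group G] (x y : G) (m : ℕ) (h : (y * x) ^ m = 1) :
    (x * y) ^ m = 1 := by
  have hs : SemiconjBy x (y * x) (x * y) := by unfold SemiconjBy; group
  have h2 := (hs.pow_right m).eq
  rw [h, mul_one] at h2
  have := mul_right_cancel (b := x) (a := (x*y)^m) (c := 1) ?_
  · exact this
  · rw [one_mul, ← h2]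

private lemma pow2_eq_one {i j : I} (hA : s.coroot i (s.α j) = 0) (hB : s.coroot j (s.α i) = 0) :
    (s.reflE i * s.reflE j) ^ 2 = 1 := by
  refine LinearEquiv.ext fun v => ?_
  set ci := s.coroot i v with hci
  set cj := s.coroot j v with hcj
  have e1 : (s.reflE i * s.reflE j) v = v - ci • s.α i - cj • s.α j := by
    simp only [mulE_apply, reflE_apply, map_sub, map_smul, smul_eq_mul, s.diag i, s.diag j,
      hA, hB, ← hci, ← hcj]
    module
  have e2 : (s.reflE i * s.reflE j) (v - ci • s.α i - cj • s.α j) = v := by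
    simp only [mulE_apply, reflE_apply, map_sub, map_smul, smul_eq_mul, s.diag i, s.diag j,
      hA, hB, ← hci, ← hcj]
    module
  show ((s.reflE i * s.reflE j) ^ 2) v = (1 : V ≃ₗ[ℝ] V) v
  simp only [pow_succ, pow_zero, one_mul, mulE_apply, oneE_apply]
  rw [show (s.reflE i * s.reflE j) v = (s.reflE i) ((s.reflE j) v) from rfl] at e1
  rw [e1, show ((s.reflE i) ((s.reflE j) (v - ci • s.α i - cj • s.α j))) =
    (s.reflE i * s.reflE j) (v - ci • s.α i - cj • s.α j) from rfl, e2]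

private lemma pow3_eq_one {i j : I} (hA : s.coroot i (s.α j) = -1) (hB : s.coroot j (s.α i) = -1) :
    (s.reflE i * s.reflE j) ^ 3 = 1 := by
  refine LinearEquiv.ext fun v => ?_
  set ci := s.coroot i v with hci
  set cj := s.coroot j v with hcj
  have e1 : (s.reflE i * s.reflE j) v = v - (ci + cj) • s.α i - cj • s.α j := by
    simp only [mulE_apply, reflE_apply, map_sub, map_smul, smul_eq_mul, s.diag i, s.diag j,
      hA, hB, ← hci, ← hcj]
    module
  have e2 : (s.reflE i * s.reflE j) (v - (ci + cj) • s.α i - cj • s.α j)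
      = v - ci • s.α i - (ci + cj) • s.α j := by
    simp only [mulE_apply, reflE_apply, map_sub, map_smul, smul_eq_mul, s.diag i, s.diag j,
      hA, hB, ← hci, ← hcj]
    module
  have e3 : (s.reflE i * s.reflE j) (v - ci • s.α i - (ci + cj) • s.α j) = v := by
    simp only [mulE_apply, reflE_apply, map_sub, map_smul, smul_eq_mul, s.diag i, s.diag j,
      hA, hB, ← hci, ← hcj]
    module
  show ((s.reflE i * s.reflE j) ^ 3) v = (1 : V ≃ₗ[ℝ] V) v
  simp only [pow_succ, pow_zero, one_mul, oneE_apply]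
  rw [mulE_apply, mulE_apply, e1, e2, e3]

private lemma pow4_eq_one {i j : I} (hA : s.coroot i (s.α j) = -1) (hB : s.coroot j (s.α i) = -2) :
    (s.reflE i * s.reflE j) ^ 4 = 1 := by
  refine LinearEquiv.ext fun v => ?_
  set ci := s.coroot i v with hci
  set cj := s.coroot j v with hcj
  have e1 : (s.reflE i * s.reflE j) v = v - (ci + cj) • s.α i - cj • s.α j := by
    simp only [mulE_apply, reflE_apply, map_sub, map_smul, smul_eq_mul, s.diag i, s.diag j,
      hA, hB, ← hci, ← hcj]
    module
  have e2 : (s.reflE i * s.reflE j) (v - (ci + cj) • s.α i - cj • s.α j)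
      = v - (2*ci + cj) • s.α i - (2*ci + 2*cj) • s.α j := by
    simp only [mulE_apply, reflE_apply, map_sub, map_smul, smul_eq_mul, s.diag i, s.diag j,
      hA, hB, ← hci, ← hcj]
    module
  have e3 : (s.reflE i * s.reflE j) (v - (2*ci + cj) • s.α i - (2*ci + 2*cj) • s.α j)
      = v - ci • s.α i - (2*ci + cj) • s.α j := by
    simp only [mulE_apply, reflE_apply, map_sub, map_smul, smul_eq_mul, s.diag i, s.diag j,
      hA, hB, ← hci, ← hcj]
    module
  have e4 : (s.reflE i * s.reflE j) (v - ci • s.α i - (2*ci + cj) • s.α j) = v := by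
    simp only [mulE_apply, reflE_apply, map_sub, map_smul, smul_eq_mul, s.diag i, s.diag j,
      hA, hB, ← hci, ← hcj]
    module
  show ((s.reflE i * s.reflE j) ^ 4) v = (1 : V ≃ₗ[ℝ] V) v
  simp only [pow_succ, pow_zero, one_mul, oneE_apply]
  rw [mulE_apply, mulE_apply, mulE_apply, e1, e2, e3, e4]

private lemma pow6_eq_one {i j : I} (hA : s.coroot i (s.α j) = -1) (hB : s.coroot j (s.α i) = -3) :
    (s.reflE i * s.reflE j) ^ 6 = 1 := by
  refine LinearEquiv.ext fun v => ?_
  set ci := s.coroot i v with hci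
  set cj := s.coroot j v with hcj
  have e1 : (s.reflE i * s.reflE j) v = v - (ci + cj) • s.α i - cj • s.α j := by
    simp only [mulE_apply, reflE_apply, map_sub, map_smul, smul_eq_mul, s.diag i, s.diag j,
      hA, hB, ← hci, ← hcj]
    module
  have e2 : (s.reflE i * s.reflE j) (v - (ci + cj) • s.α i - cj • s.α j)
      = v - (3*ci + 2*cj) • s.α i - (3*ci + 3*cj) • s.α j := by
    simp only [mulE_apply, reflE_apply, map_sub, map_smul, smul_eq_mul, s.diag i, s.diag j,
      hA, hB, ← hci, ← hcj]
    module
  have e3 : (s.reflE i * s.reflE j) (v - (3*ci + 2*cj) • s.α i - (3*ci + 3*cj) • s.α j)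
      = v - (4*ci + 2*cj) • s.α i - (6*ci + 4*cj) • s.α j := by
    simp only [mulE_apply, reflE_apply, map_sub, map_smul, smul_eq_mul, s.diag i, s.diag j,
      hA, hB, ← hci, ← hcj]
    module
  have e4 : (s.reflE i * s.reflE j) (v - (4*ci + 2*cj) • s.α i - (6*ci + 4*cj) • s.α j)
      = v - (3*ci + cj) • s.α i - (6*ci + 3*cj) • s.α j := by
    simp only [mulE_apply, reflE_apply, map_sub, map_smul, smul_eq_mul, s.diag i, s.diag j,
      hA, hB, ← hci, ← hcj]
    module
  have e5 : (s.reflE i * s.reflE j) (v - (3*ci + cj) • s.α i - (6*ci + 3*cj) • s.α j)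
      = v - ci • s.α i - (3*ci + cj) • s.α j := by
    simp only [mulE_apply, reflE_apply, map_sub, map_smul, smul_eq_mul, s.diag i, s.diag j,
      hA, hB, ← hci, ← hcj]
    module
  have e6 : (s.reflE i * s.reflE j) (v - ci • s.α i - (3*ci + cj) • s.α j) = v := by
    simp only [mulE_apply, reflE_apply, map_sub, map_smul, smul_eq_mul, s.diag i, s.diag j,
      hA, hB, ← hci, ← hcj]
    module
  show ((s.reflE i * s.reflE j) ^ 6) v = (1 : V ≃ₗ[ℝ] V) v
  simp only [pow_succ, pow_zero, one_mul, oneE_apply]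
  rw [mulE_apply, mulE_apply, mulE_apply, mulE_apply, mulE_apply, e1, e2, e3, e4, e5, e6]

lemma liftable : s.cox.IsLiftable s.reflE := by
  intro i j
  rcases eq_or_ne i j with rfl | h
  · rw [s.cox.diagonal i, pow_one, reflE_sq]
  · have hAij : s.coroot i (s.α j) = s.Amat i j := rfl
    have hAji : s.coroot j (s.α i) = s.Amat j i := rfl
    rcases s.offdiag_cases h with ⟨h1, h2, hm⟩ | ⟨h1, h2, hm⟩ | ⟨h12, hm⟩ | ⟨h12, hm⟩ | ⟨_, hm⟩
    · rw [hm]; exact s.pow2_eq_one (hAij.trans h1) (hAji.trans h2)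
    · rw [hm]; exact s.pow3_eq_one (hAij.trans h1) (hAji.trans h2)
    · rw [hm]
      rcases h12 with ⟨h1, h2⟩ | ⟨h1, h2⟩
      · exact s.pow4_eq_one (hAij.trans h1) (hAji.trans h2)
      · exact cancel_pow _ _ _ (s.pow4_eq_one (hAji.trans h2) (hAij.trans h1))
    · rw [hm]
      rcases h12 with ⟨h1, h2⟩ | ⟨h1, h2⟩
      · exact s.pow6_eq_one (hAij.trans h1) (hAji.trans h2)
      · exact cancel_pow _ _ _ (s.pow6_eq_one (hAji.trans h2) (hAij.trans h1))
    · rw [hm, pow_zero]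

/-- The abstract Coxeter system -/
def csys : CoxeterSystem s.cox s.cox.Group := s.cox.toCoxeterSystem

/-- The geometric representation on `V` -/
def glrep : s.cox.Group →* (V ≃ₗ[ℝ] V) := s.csys.lift ⟨s.reflE, s.liftable⟩

@[simp] lemma glrep_simple (i : I) : s.glrep (s.csys.simple i) = s.reflE i :=
  s.csys.lift_apply_simple s.liftable i

end
end GCMRep


set_option linter.unusedSectionVars false

namespace GCMRep

variable {I V : Type*} [Fintype I] [AddCommGroup V] [Module ℝ V] (s : GCMRep I V)

noncomputable section
open Classical

/-- basis vector of the coroot model -/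
def del (i : I) : I → ℝ := Pi.single i 1

lemma del_apply_self (i : I) : del i i = (1:ℝ) := Pi.single_eq_same i 1

lemma del_apply_ne {i k : I} (h : k ≠ i) : del (I := I) i k = 0 := Pi.single_eq_of_ne h 1

/-- the pairing functional of the coroot model -/
def cf (i : I) : (I → ℝ) →ₗ[ℝ] ℝ where
  toFun x := ∑ j, x j * s.Amat j i
  map_add' x y := by simp [add_mul, Finset.sum_add_distrib]
  map_smul' c x := by simp [Finset.mul_sum, mul_assoc]

lemma cf_apply (i : I) (x : I → ℝ) : s.cf i x = ∑ j, x j * s.Amat j i := rfl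

lemma cf_del (i k : I) : s.cf i (del k) = s.Amat k i := by
  rw [cf_apply]
  rw [Finset.sum_eq_single k]
  · rw [del_apply_self, one_mul]
  · intro b _ hb
    rw [del_apply_ne hb, zero_mul]
  · intro h; exact absurd (Finset.mem_univ k) h

/-- reflection on the coroot model -/
def tauMap (i : I) : (I → ℝ) →ₗ[ℝ] (I → ℝ) :=
  LinearMap.id - LinearMap.smulRight (s.cf i) (del i)

lemma tauMap_apply (i : I) (x : I → ℝ) : s.tauMap i x = x - (s.cf i x) • del i := rfl

lemma tauMap_involutive (i : I) : Function.Involutive (s.tauMap i) := by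
  intro x
  have h2 : s.cf i (del i) = 2 := by rw [cf_del, A_diag]
  simp only [tauMap_apply, map_sub, map_smul, h2, smul_eq_mul]
  module

def tau (i : I) : (I → ℝ) ≃ₗ[ℝ] (I → ℝ) :=
  LinearEquiv.ofInvolutive (s.tauMap i) (s.tauMap_involutive i)

lemma tau_apply (i : I) (x : I → ℝ) : s.tau i x = x - (s.cf i x) • del i := rfl

lemma mulF_apply (e1 e2 : (I → ℝ) ≃ₗ[ℝ] (I → ℝ)) (x : I → ℝ) : (e1 * e2) x = e1 (e2 x) := rfl
lemma oneF_apply (x : I → ℝ) : (1 : (I → ℝ) ≃ₗ[ℝ] (I → ℝ)) x = x := rfl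

/-- the comparison map sending the coroot model into `V →ₗ[ℝ] ℝ` -/
def cT : (I → ℝ) →ₗ[ℝ] (V →ₗ[ℝ] ℝ) where
  toFun x := ∑ j, x j • s.coroot j
  map_add' x y := by
    simp only [Pi.add_apply, add_smul]
    rw [Finset.sum_add_distrib]
  map_smul' c x := by
    simp only [Pi.smul_apply, RingHom.id_apply, Finset.smul_sum, smul_smul, smul_eq_mul]

lemma cT_apply (x : I → ℝ) (v : V) : s.cT x v = ∑ j, x j * s.coroot j v := by
  simp [cT, LinearMap.sum_apply]

lemma cT_del (i : I) : s.cT (del i) = s.coroot i := by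
  refine LinearMap.ext fun v => ?_
  rw [cT_apply]
  rw [Finset.sum_eq_single i]
  · rw [del_apply_self, one_mul]
  · intro b _ hb
    rw [del_apply_ne hb, zero_mul]
  · intro h; exact absurd (Finset.mem_univ i) h

lemma cT_inj : Function.Injective s.cT := by
  intro x y hxy
  have h : s.cT (x - y) = 0 := by rw [map_sub, hxy, sub_self]
  have h2 : ∑ j, (x - y) j • s.coroot j = 0 := h
  have h3 := Fintype.linearIndependent_iff.mp s.indepCoroot (fun j => (x - y) j) h2
  funext j
  have := h3 j
  simpa [sub_eq_zero] using this

/-- key single-reflection intertwining identity -/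
lemma cT_alpha (x : I → ℝ) (i : I) : s.cT x (s.α i) = s.cf i x := by
  rw [cT_apply, cf_apply]
  exact Finset.sum_congr rfl fun j _ => rfl

/-- key single-reflection intertwining identity -/
lemma cT_tau (i : I) (x : I → ℝ) (v : V) : s.cT (s.tau i x) v = s.cT x (s.reflE i v) := by
  rw [tau_apply, map_sub, map_smul, cT_del, reflE_apply, map_sub, map_smul]
  simp only [LinearMap.sub_apply, LinearMap.smul_apply, smul_eq_mul, cT_alpha]
  ring

private lemma tau_pair_pow (i j : I) (m : ℕ) (x : I → ℝ) (v : V) :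
    s.cT (((s.tau i * s.tau j) ^ m) x) v = s.cT x (((s.reflE j * s.reflE i) ^ m) v) := by
  induction m generalizing v with
  | zero => simp only [pow_zero, oneF_apply, oneE_apply]
  | succ m ih =>
    rw [pow_succ' (s.tau i * s.tau j) m, pow_succ (s.reflE j * s.reflE i) m]
    rw [mulF_apply, mulF_apply, mulE_apply, mulE_apply]
    rw [cT_tau, cT_tau]
    exact ih _

lemma tau_liftable : s.cox.IsLiftable s.tau := by
  intro i j
  have hr : (s.reflE j * s.reflE i) ^ (s.cox i j) = 1 := by
    rw [s.cox.symmetric i j]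
    exact s.liftable j i
  refine LinearEquiv.ext fun x => ?_
  apply s.cT_inj
  refine LinearMap.ext fun v => ?_
  have := s.tau_pair_pow i j (s.cox i j) x v
  rw [hr, oneE_apply] at this
  rw [this]
  rfl

/-- the coroot-side representation -/
def psirep : s.cox.Group →* ((I → ℝ) ≃ₗ[ℝ] (I → ℝ)) := s.csys.lift ⟨s.tau, s.tau_liftable⟩

@[simp] lemma psirep_simple (i : I) : s.psirep (s.csys.simple i) = s.tau i :=
  s.csys.lift_apply_simple s.tau_liftable i

/-- the global intertwining identity -/
lemma interT (w : s.cox.Group) : ∀ (x : I → ℝ) (v : V),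
    s.cT (s.psirep w x) (s.glrep w v) = s.cT x v := by
  induction w using CoxeterSystem.simple_induction s.csys with
  | simple i =>
    intro x v
    simp only [psirep_simple, glrep_simple]
    rw [cT_tau]
    rw [show s.reflE i (s.reflE i v) = v from s.reflMap_involutive i v]
  | one => intro x v; simp only [map_one, oneF_apply, oneE_apply]
  | mul w1 w2 h1 h2 =>
    intro x v
    simp only [map_mul, mulF_apply, mulE_apply]
    rw [h1, h2]

/-- pull the group action through the pairing -/
lemma cT_glrep (w : s.cox.Group) (x : I → ℝ) (v : V) :
    s.cT x (s.glrep w v) = s.cT (s.psirep w⁻¹ x) v := by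
  have := s.interT w (s.psirep w⁻¹ x) v
  rw [← this]
  congr 1
  rw [← mulF_apply, ← map_mul, mul_inv_cancel, map_one, oneF_apply]

/-- integrality of vectors -/
def IsIntegral (x : I → ℝ) : Prop := ∀ j, ∃ m : ℤ, x j = (m : ℝ)

lemma isIntegral_del (i : I) : IsIntegral (del (I := I) i) := by
  intro j
  rcases eq_or_ne j i with rfl | h
  · exact ⟨1, by rw [del_apply_self]; norm_num⟩
  · exact ⟨0, by rw [del_apply_ne h]; norm_num⟩

lemma isIntegral_cf {x : I → ℝ} (hx : IsIntegral x) (i : I) : ∃ m : ℤ, s.cf i x = (m : ℝ) := by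
  rw [cf_apply]
  have : ∀ j : I, ∃ m : ℤ, x j * s.Amat j i = (m : ℝ) := by
    intro j
    obtain ⟨m1, hm1⟩ := hx j
    exact ⟨m1 * s.nmat j i, by rw [hm1, s.A_eq_nmat]; push_cast; ring⟩
  choose f hf using this
  exact ⟨∑ j, f j, by rw [Finset.sum_congr rfl (fun j _ => hf j)]; push_cast; rfl⟩

lemma isIntegral_tau {x : I → ℝ} (hx : IsIntegral x) (i : I) : IsIntegral (s.tau i x) := by
  obtain ⟨m, hm⟩ := s.isIntegral_cf hx i
  intro j
  obtain ⟨m1, hm1⟩ := hx j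
  rcases eq_or_ne j i with rfl | h
  · refine ⟨m1 - m * 1, ?_⟩
    rw [tau_apply]
    simp only [Pi.sub_apply, Pi.smul_apply, smul_eq_mul, hm, hm1, del_apply_self]
    push_cast; ring
  · refine ⟨m1, ?_⟩
    rw [tau_apply]
    simp only [Pi.sub_apply, Pi.smul_apply, smul_eq_mul, hm, hm1, del_apply_ne h]
    push_cast; ring

lemma isIntegral_psirep (w : s.cox.Group) : ∀ x, IsIntegral x → IsIntegral (s.psirep w x) := by
  induction w using CoxeterSystem.simple_induction s.csys with
  | simple i => intro x hx; simpa only [psirep_simple] using s.isIntegral_tau hx i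
  | one => intro x hx; simpa only [map_one, oneF_apply] using hx
  | mul w1 w2 h1 h2 =>
    intro x hx
    rw [map_mul, mulF_apply]
    exact h1 _ (h2 _ hx)

end
end GCMRep


set_option linter.unusedSectionVars false

namespace GCMRep

variable {I V : Type*} [Fintype I] [AddCommGroup V] [Module ℝ V] (s : GCMRep I V)

noncomputable section
open Classical

lemma tau_combo_i (i j : I) (hij : i ≠ j) (X Y : ℝ) :
    s.tau i (X • del i + Y • del j) = (-X - s.Amat j i * Y) • del i + Y • del j := by
  rw [tau_apply]
  have hcf : s.cf i (X • del i + Y • del j) = 2 * X + s.Amat j i * Y := by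
    rw [map_add, map_smul, map_smul, cf_del, cf_del, A_diag]
    simp only [smul_eq_mul]
    ring
  rw [hcf]
  module

lemma tau_combo_j (i j : I) (hij : i ≠ j) (X Y : ℝ) :
    s.tau j (X • del i + Y • del j) = X • del i + (-Y - s.Amat i j * X) • del j := by
  rw [tau_apply]
  have hcf : s.cf j (X • del i + Y • del j) = s.Amat i j * X + 2 * Y := by
    rw [map_add, map_smul, map_smul, cf_del, cf_del, A_diag]
    simp only [smul_eq_mul]
    ring
  rw [hcf]
  module

/-- orbit vectors of the alternating words -/
def uvec (i j : I) (q : ℕ) : I → ℝ :=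
  s.psirep (s.csys.wordProd (CoxeterSystem.alternatingWord i j q)) (del i)

lemma uvec_zero (i j : I) : s.uvec i j 0 = del i := by
  unfold uvec
  rw [show CoxeterSystem.alternatingWord i j 0 = [] from rfl, CoxeterSystem.wordProd_nil,
    map_one, oneF_apply]

lemma uvec_succ_even (i j : I) (q : ℕ) (hq : Even q) :
    s.uvec i j (q + 1) = s.tau j (s.uvec i j q) := by
  unfold uvec
  rw [CoxeterSystem.alternatingWord_succ', if_pos hq, CoxeterSystem.wordProd_cons, map_mul,
    mulF_apply, psirep_simple]

lemma uvec_succ_odd (i j : I) (q : ℕ) (hq : ¬Even q) :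
    s.uvec i j (q + 1) = s.tau i (s.uvec i j q) := by
  unfold uvec
  rw [CoxeterSystem.alternatingWord_succ', if_neg hq, CoxeterSystem.wordProd_cons, map_mul,
    mulF_apply, psirep_simple]

private lemma rank2_c2 {i j : I} (hij : i ≠ j) (ha : s.Amat i j = 0) (hb : s.Amat j i = 0)
    {q : ℕ} (hq : q ≤ 1) :
    ∃ X Y : ℝ, 0 ≤ X ∧ 0 ≤ Y ∧ s.uvec i j q = X • del i + Y • del j := by
  have e0 : s.uvec i j 0 = (1:ℝ) • del i + (0:ℝ) • del j := by rw [uvec_zero]; module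
  have e1 : s.uvec i j 1 = (1:ℝ) • del i + (0:ℝ) • del j := by
    have st1 : s.uvec i j 1 = s.tau j (s.uvec i j 0) := s.uvec_succ_even i j 0 (by decide)
    rw [st1, e0, s.tau_combo_j i j hij]
    simp only [ha, hb]
    match_scalars <;> norm_num
  interval_cases q
  · exact ⟨1, 0, by norm_num, by norm_num, e0⟩
  · exact ⟨1, 0, by norm_num, by norm_num, e1⟩

private lemma rank2_c3 {i j : I} (hij : i ≠ j) (ha : s.Amat i j = -1) (hb : s.Amat j i = -1)
    {q : ℕ} (hq : q ≤ 2) :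
    ∃ X Y : ℝ, 0 ≤ X ∧ 0 ≤ Y ∧ s.uvec i j q = X • del i + Y • del j := by
  have e0 : s.uvec i j 0 = (1:ℝ) • del i + (0:ℝ) • del j := by rw [uvec_zero]; module
  have e1 : s.uvec i j 1 = (1:ℝ) • del i + (1:ℝ) • del j := by
    have st1 : s.uvec i j 1 = s.tau j (s.uvec i j 0) := s.uvec_succ_even i j 0 (by decide)
    rw [st1, e0, s.tau_combo_j i j hij]
    simp only [ha, hb]
    match_scalars <;> norm_num
  have e2 : s.uvec i j 2 = (0:ℝ) • del i + (1:ℝ) • del j := by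
    have st2 : s.uvec i j 2 = s.tau i (s.uvec i j 1) := s.uvec_succ_odd i j 1 (by decide)
    rw [st2, e1, s.tau_combo_i i j hij]
    simp only [ha, hb]
    match_scalars <;> norm_num
  interval_cases q
  · exact ⟨1, 0, by norm_num, by norm_num, e0⟩
  · exact ⟨1, 1, by norm_num, by norm_num, e1⟩
  · exact ⟨0, 1, by norm_num, by norm_num, e2⟩

private lemma rank2_c4a {i j : I} (hij : i ≠ j) (ha : s.Amat i j = -1) (hb : s.Amat j i = -2)
    {q : ℕ} (hq : q ≤ 3) :
    ∃ X Y : ℝ, 0 ≤ X ∧ 0 ≤ Y ∧ s.uvec i j q = X • del i + Y • del j := by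
  have e0 : s.uvec i j 0 = (1:ℝ) • del i + (0:ℝ) • del j := by rw [uvec_zero]; module
  have e1 : s.uvec i j 1 = (1:ℝ) • del i + (1:ℝ) • del j := by
    have st1 : s.uvec i j 1 = s.tau j (s.uvec i j 0) := s.uvec_succ_even i j 0 (by decide)
    rw [st1, e0, s.tau_combo_j i j hij]
    simp only [ha, hb]
    match_scalars <;> norm_num
  have e2 : s.uvec i j 2 = (1:ℝ) • del i + (1:ℝ) • del j := by
    have st2 : s.uvec i j 2 = s.tau i (s.uvec i j 1) := s.uvec_succ_odd i j 1 (by decide)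
    rw [st2, e1, s.tau_combo_i i j hij]
    simp only [ha, hb]
    match_scalars <;> norm_num
  have e3 : s.uvec i j 3 = (1:ℝ) • del i + (0:ℝ) • del j := by
    have st3 : s.uvec i j 3 = s.tau j (s.uvec i j 2) := s.uvec_succ_even i j 2 (by decide)
    rw [st3, e2, s.tau_combo_j i j hij]
    simp only [ha, hb]
    match_scalars <;> norm_num
  interval_cases q
  · exact ⟨1, 0, by norm_num, by norm_num, e0⟩
  · exact ⟨1, 1, by norm_num, by norm_num, e1⟩
  · exact ⟨1, 1, by norm_num, by norm_num, e2⟩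
  · exact ⟨1, 0, by norm_num, by norm_num, e3⟩

private lemma rank2_c4b {i j : I} (hij : i ≠ j) (ha : s.Amat i j = -2) (hb : s.Amat j i = -1)
    {q : ℕ} (hq : q ≤ 3) :
    ∃ X Y : ℝ, 0 ≤ X ∧ 0 ≤ Y ∧ s.uvec i j q = X • del i + Y • del j := by
  have e0 : s.uvec i j 0 = (1:ℝ) • del i + (0:ℝ) • del j := by rw [uvec_zero]; module
  have e1 : s.uvec i j 1 = (1:ℝ) • del i + (2:ℝ) • del j := by
    have st1 : s.uvec i j 1 = s.tau j (s.uvec i j 0) := s.uvec_succ_even i j 0 (by decide)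
    rw [st1, e0, s.tau_combo_j i j hij]
    simp only [ha, hb]
    match_scalars <;> norm_num
  have e2 : s.uvec i j 2 = (1:ℝ) • del i + (2:ℝ) • del j := by
    have st2 : s.uvec i j 2 = s.tau i (s.uvec i j 1) := s.uvec_succ_odd i j 1 (by decide)
    rw [st2, e1, s.tau_combo_i i j hij]
    simp only [ha, hb]
    match_scalars <;> norm_num
  have e3 : s.uvec i j 3 = (1:ℝ) • del i + (0:ℝ) • del j := by
    have st3 : s.uvec i j 3 = s.tau j (s.uvec i j 2) := s.uvec_succ_even i j 2 (by decide)
    rw [st3, e2, s.tau_combo_j i j hij]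
    simp only [ha, hb]
    match_scalars <;> norm_num
  interval_cases q
  · exact ⟨1, 0, by norm_num, by norm_num, e0⟩
  · exact ⟨1, 2, by norm_num, by norm_num, e1⟩
  · exact ⟨1, 2, by norm_num, by norm_num, e2⟩
  · exact ⟨1, 0, by norm_num, by norm_num, e3⟩

private lemma rank2_c6a {i j : I} (hij : i ≠ j) (ha : s.Amat i j = -1) (hb : s.Amat j i = -3)
    {q : ℕ} (hq : q ≤ 5) :
    ∃ X Y : ℝ, 0 ≤ X ∧ 0 ≤ Y ∧ s.uvec i j q = X • del i + Y • del j := by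
  have e0 : s.uvec i j 0 = (1:ℝ) • del i + (0:ℝ) • del j := by rw [uvec_zero]; module
  have e1 : s.uvec i j 1 = (1:ℝ) • del i + (1:ℝ) • del j := by
    have st1 : s.uvec i j 1 = s.tau j (s.uvec i j 0) := s.uvec_succ_even i j 0 (by decide)
    rw [st1, e0, s.tau_combo_j i j hij]
    simp only [ha, hb]
    match_scalars <;> norm_num
  have e2 : s.uvec i j 2 = (2:ℝ) • del i + (1:ℝ) • del j := by
    have st2 : s.uvec i j 2 = s.tau i (s.uvec i j 1) := s.uvec_succ_odd i j 1 (by decide)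
    rw [st2, e1, s.tau_combo_i i j hij]
    simp only [ha, hb]
    match_scalars <;> norm_num
  have e3 : s.uvec i j 3 = (2:ℝ) • del i + (1:ℝ) • del j := by
    have st3 : s.uvec i j 3 = s.tau j (s.uvec i j 2) := s.uvec_succ_even i j 2 (by decide)
    rw [st3, e2, s.tau_combo_j i j hij]
    simp only [ha, hb]
    match_scalars <;> norm_num
  have e4 : s.uvec i j 4 = (1:ℝ) • del i + (1:ℝ) • del j := by
    have st4 : s.uvec i j 4 = s.tau i (s.uvec i j 3) := s.uvec_succ_odd i j 3 (by decide)
    rw [st4, e3, s.tau_combo_i i j hij]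
    simp only [ha, hb]
    match_scalars <;> norm_num
  have e5 : s.uvec i j 5 = (1:ℝ) • del i + (0:ℝ) • del j := by
    have st5 : s.uvec i j 5 = s.tau j (s.uvec i j 4) := s.uvec_succ_even i j 4 (by decide)
    rw [st5, e4, s.tau_combo_j i j hij]
    simp only [ha, hb]
    match_scalars <;> norm_num
  interval_cases q
  · exact ⟨1, 0, by norm_num, by norm_num, e0⟩
  · exact ⟨1, 1, by norm_num, by norm_num, e1⟩
  · exact ⟨2, 1, by norm_num, by norm_num, e2⟩
  · exact ⟨2, 1, by norm_num, by norm_num, e3⟩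
  · exact ⟨1, 1, by norm_num, by norm_num, e4⟩
  · exact ⟨1, 0, by norm_num, by norm_num, e5⟩

private lemma rank2_c6b {i j : I} (hij : i ≠ j) (ha : s.Amat i j = -3) (hb : s.Amat j i = -1)
    {q : ℕ} (hq : q ≤ 5) :
    ∃ X Y : ℝ, 0 ≤ X ∧ 0 ≤ Y ∧ s.uvec i j q = X • del i + Y • del j := by
  have e0 : s.uvec i j 0 = (1:ℝ) • del i + (0:ℝ) • del j := by rw [uvec_zero]; module
  have e1 : s.uvec i j 1 = (1:ℝ) • del i + (3:ℝ) • del j := by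
    have st1 : s.uvec i j 1 = s.tau j (s.uvec i j 0) := s.uvec_succ_even i j 0 (by decide)
    rw [st1, e0, s.tau_combo_j i j hij]
    simp only [ha, hb]
    match_scalars <;> norm_num
  have e2 : s.uvec i j 2 = (2:ℝ) • del i + (3:ℝ) • del j := by
    have st2 : s.uvec i j 2 = s.tau i (s.uvec i j 1) := s.uvec_succ_odd i j 1 (by decide)
    rw [st2, e1, s.tau_combo_i i j hij]
    simp only [ha, hb]
    match_scalars <;> norm_num
  have e3 : s.uvec i j 3 = (2:ℝ) • del i + (3:ℝ) • del j := by
    have st3 : s.uvec i j 3 = s.tau j (s.uvec i j 2) := s.uvec_succ_even i j 2 (by decide)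
    rw [st3, e2, s.tau_combo_j i j hij]
    simp only [ha, hb]
    match_scalars <;> norm_num
  have e4 : s.uvec i j 4 = (1:ℝ) • del i + (3:ℝ) • del j := by
    have st4 : s.uvec i j 4 = s.tau i (s.uvec i j 3) := s.uvec_succ_odd i j 3 (by decide)
    rw [st4, e3, s.tau_combo_i i j hij]
    simp only [ha, hb]
    match_scalars <;> norm_num
  have e5 : s.uvec i j 5 = (1:ℝ) • del i + (0:ℝ) • del j := by
    have st5 : s.uvec i j 5 = s.tau j (s.uvec i j 4) := s.uvec_succ_even i j 4 (by decide)
    rw [st5, e4, s.tau_combo_j i j hij]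
    simp only [ha, hb]
    match_scalars <;> norm_num
  interval_cases q
  · exact ⟨1, 0, by norm_num, by norm_num, e0⟩
  · exact ⟨1, 3, by norm_num, by norm_num, e1⟩
  · exact ⟨2, 3, by norm_num, by norm_num, e2⟩
  · exact ⟨2, 3, by norm_num, by norm_num, e3⟩
  · exact ⟨1, 3, by norm_num, by norm_num, e4⟩
  · exact ⟨1, 0, by norm_num, by norm_num, e5⟩

private lemma rank2_inf {i j : I} (hij : i ≠ j) (hp : (4:ℝ) ≤ s.Amat i j * s.Amat j i)
    (ha : s.Amat i j ≤ 0) (hb : s.Amat j i ≤ 0) (q : ℕ) :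
    ∃ X Y : ℝ, 0 ≤ X ∧ 0 ≤ Y ∧ s.uvec i j q = X • del i + Y • del j := by
  set a := s.Amat i j with hadef
  set b := s.Amat j i with hbdef
  set p := a * b with hpdef
  have key : ∀ k : ℕ, ∃ X B : ℝ, s.uvec i j (2*k) = X • del i + ((-a) * B) • del j ∧
      0 ≤ B ∧ 1 ≤ X ∧ (p - 2) * B ≤ X ∧ X ≤ (p - 1) * B + 1 := by
    intro k
    induction k with
    | zero =>
      refine ⟨1, 0, ?_, le_refl 0, le_refl 1, by norm_num, by norm_num⟩
      rw [show 2*0 = 0 from rfl, uvec_zero]; module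
    | succ k ih =>
      obtain ⟨X, B, hu, hB, hX1, hXl, hXu⟩ := ih
      have hodd : s.uvec i j (2*k+1) = X • del i + ((-a) * (X - B)) • del j := by
        rw [s.uvec_succ_even i j (2*k) (even_two_mul k), hu, s.tau_combo_j i j hij, ← hadef]
        match_scalars <;> ring
      have heven : s.uvec i j (2*(k+1)) = ((p-1)*X - p*B) • del i + ((-a) * (X - B)) • del j := by
        rw [show 2*(k+1) = (2*k+1)+1 from by ring, s.uvec_succ_odd i j (2*k+1)
          (by simp [Nat.even_add_one, even_two_mul]), hodd, s.tau_combo_i i j hij, ← hbdef]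
        match_scalars <;> ring
      refine ⟨(p-1)*X - p*B, X - B, heven, ?_, ?_, ?_, ?_⟩
      · nlinarith
      · nlinarith
      · nlinarith
      · nlinarith
  rcases Nat.even_or_odd q with ⟨k, hk⟩ | ⟨k, hk⟩
  · obtain ⟨X, B, hu, hB, hX1, _, _⟩ := key k
    rw [show q = 2*k from by omega] 
    exact ⟨X, (-a)*B, by linarith, mul_nonneg (by linarith) hB, hu⟩
  · obtain ⟨X, B, hu, hB, hX1, hXl, hXu⟩ := key k
    have hodd : s.uvec i j (2*k+1) = X • del i + ((-a) * (X - B)) • del j := by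
      rw [s.uvec_succ_even i j (2*k) (even_two_mul k), hu, s.tau_combo_j i j hij, ← hadef]
      match_scalars <;> ring
    rw [show q = 2*k+1 from by omega]
    refine ⟨X, (-a)*(X - B), by linarith, mul_nonneg (by linarith) ?_, hodd⟩
    nlinarith

/-- the rank-2 positivity lemma -/
lemma rank2 {i j : I} (hij : i ≠ j) (q : ℕ) (hq : s.cox i j = 0 ∨ q + 1 ≤ s.cox i j) :
    ∃ X Y : ℝ, 0 ≤ X ∧ 0 ≤ Y ∧ s.uvec i j q = X • del i + Y • del j := by
  rcases s.offdiag_cases hij with ⟨h1, h2, hm⟩ | ⟨h1, h2, hm⟩ | ⟨h12, hm⟩ | ⟨h12, hm⟩ | ⟨hp, hm⟩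
  · exact s.rank2_c2 hij h1 h2 (by rcases hq with h | h <;> omega)
  · exact s.rank2_c3 hij h1 h2 (by rcases hq with h | h <;> omega)
  · rcases h12 with ⟨h1, h2⟩ | ⟨h1, h2⟩
    · exact s.rank2_c4a hij h1 h2 (by rcases hq with h | h <;> omega)
    · exact s.rank2_c4b hij h1 h2 (by rcases hq with h | h <;> omega)
  · rcases h12 with ⟨h1, h2⟩ | ⟨h1, h2⟩
    · exact s.rank2_c6a hij h1 h2 (by rcases hq with h | h <;> omega)
    · exact s.rank2_c6b hij h1 h2 (by rcases hq with h | h <;> omega)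
  · have ha := s.offdiag_nonpos i j hij
    have hb := s.offdiag_nonpos j i hij.symm
    have hp4 : (4:ℝ) ≤ s.Amat i j * s.Amat j i := by
      rw [s.A_eq_nmat i j, s.A_eq_nmat j i]
      have : ((4:ℤ):ℝ) ≤ ((s.pz i j : ℤ):ℝ) := by exact_mod_cast hp
      calc (4:ℝ) = ((4:ℤ):ℝ) := by norm_num
      _ ≤ ((s.pz i j : ℤ):ℝ) := this
      _ = (s.nmat i j : ℝ) * (s.nmat j i : ℝ) := by rw [show s.pz i j = s.nmat i j * s.nmat j i from rfl]; push_cast; ring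
    exact s.rank2_inf hij hp4 ha hb q

end
end GCMRep


set_option linter.unusedSectionVars false

namespace GCMRep

variable {I V : Type*} [Fintype I] [AddCommGroup V] [Module ℝ V] (s : GCMRep I V)

noncomputable section
open Classical
open CoxeterSystem

lemma staircase (n : ℕ) : ∀ (w : s.cox.Group) (i j : I), s.csys.length w ≤ n → i ≠ j →
    ¬s.csys.IsRightDescent w i → s.csys.IsRightDescent w j →
    ∃ (v : s.cox.Group) (q : ℕ), 1 ≤ q ∧
      w = v * s.csys.wordProd (alternatingWord i j q) ∧
      s.csys.length w = s.csys.length v + q ∧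
      ¬s.csys.IsRightDescent v i ∧ ¬s.csys.IsRightDescent v j := by
  induction n with
  | zero =>
    intro w i j hl _ _ hdj
    have hw1 : w = 1 := s.csys.length_eq_zero_iff.mp (Nat.le_antisymm hl (Nat.zero_le _))
    exact absurd (hw1 ▸ hdj) (s.csys.not_isRightDescent_one j)
  | succ n ih =>
    intro w i j hl hij hni hdj
    set w' := w * s.csys.simple j with hw'def
    have hlen' : s.csys.length w' + 1 = s.csys.length w := s.csys.isRightDescent_iff.mp hdj
    have hw'j : ¬s.csys.IsRightDescent w' j :=
      s.csys.isRightDescent_iff_not_isRightDescent_mul.mp hdj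
    have hback : w = w' * s.csys.simple j := by
      rw [hw'def, s.csys.simple_mul_simple_cancel_right]
    by_cases h1 : s.csys.IsRightDescent w' i
    · obtain ⟨v, q, hq1, hw'', hlen'', hvj, hvi⟩ :=
        ih w' j i (by omega) hij.symm hw'j h1
      refine ⟨v, q + 1, by omega, ?_, by omega, hvi, hvj⟩
      rw [hback, hw'', mul_assoc, ← s.csys.wordProd_concat, ← alternatingWord_succ]
    · refine ⟨w', 1, le_refl 1, ?_, by omega, h1, hw'j⟩
      rw [show alternatingWord i j 1 = [j] from rfl, s.csys.wordProd_singleton]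
      exact hback

lemma alt_bound {w v : s.cox.Group} {q : ℕ} {i j : I} (hij : i ≠ j)
    (hw : w = v * s.csys.wordProd (alternatingWord i j q))
    (hlen : s.csys.length w = s.csys.length v + q)
    (hni : ¬s.csys.IsRightDescent w i) :
    s.cox i j = 0 ∨ q + 1 ≤ s.cox i j := by
  by_cases h0 : s.cox i j = 0
  · exact Or.inl h0
  right
  by_contra hgt
  push_neg at hgt
  have hMji : s.cox j i ≠ 0 := by rwa [s.cox.symmetric j i]
  have hgt' : q + 1 > s.cox j i := by rw [s.cox.symmetric j i]; omega
  have hnotred := s.csys.not_isReduced_alternatingWord j i hMji hgt'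
  have hwsi : w * s.csys.simple i = v * s.csys.wordProd (alternatingWord j i (q + 1)) := by
    rw [hw, mul_assoc, ← s.csys.wordProd_concat, ← alternatingWord_succ]
  have hlwsi : s.csys.length (w * s.csys.simple i) = s.csys.length w + 1 :=
    s.csys.not_isRightDescent_iff.mp hni
  have hle : s.csys.length (w * s.csys.simple i) ≤
      s.csys.length v + s.csys.length (s.csys.wordProd (alternatingWord j i (q + 1))) := by
    rw [hwsi]; exact s.csys.length_mul_le _ _
  have hle2 : s.csys.length (s.csys.wordProd (alternatingWord j i (q + 1))) ≤ q + 1 := by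
    have := s.csys.length_wordProd_le (alternatingWord j i (q + 1))
    rwa [length_alternatingWord] at this
  have hred : s.csys.IsReduced (alternatingWord j i (q + 1)) := by
    unfold CoxeterSystem.IsReduced
    rw [length_alternatingWord]
    omega
  exact hnotred hred

lemma del_nonneg (i : I) : (0 : I → ℝ) ≤ del i := by
  intro k
  rcases eq_or_ne k i with rfl | h
  · rw [del_apply_self]; norm_num
  · rw [del_apply_ne h]
    exact le_of_eq rfl

/-- The fundamental positivity theorem for the coroot representation. -/
lemma psirep_pos_aux (n : ℕ) : ∀ (w : s.cox.Group) (i : I), s.csys.length w ≤ n →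
    ¬s.csys.IsRightDescent w i → (0 : I → ℝ) ≤ s.psirep w (del i) := by
  induction n with
  | zero =>
    intro w i hl _
    have hw1 : w = 1 := s.csys.length_eq_zero_iff.mp (Nat.le_antisymm hl (Nat.zero_le _))
    rw [hw1, map_one, oneF_apply]
    exact del_nonneg i
  | succ n ih =>
    intro w i hl hni
    by_cases hw1 : w = 1
    · rw [hw1, map_one, oneF_apply]; exact del_nonneg i
    obtain ⟨j, hdj⟩ := s.csys.exists_rightDescent_of_ne_one hw1
    have hij : i ≠ j := by rintro rfl; exact hni hdj
    obtain ⟨v, q, hq1, hw, hlen, hvi, hvj⟩ := s.staircase (n+1) w i j hl hij hni hdj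
    obtain ⟨X, Y, hX, hY, hu⟩ := s.rank2 hij q (s.alt_bound hij hw hlen hni)
    have hψ : s.psirep w (del i) = X • s.psirep v (del i) + Y • s.psirep v (del j) := by
      rw [hw, map_mul, mulF_apply, show s.psirep (s.csys.wordProd (alternatingWord i j q))
        (del i) = s.uvec i j q from rfl, hu, map_add, map_smul, map_smul]
    rw [hψ]
    have hlv : s.csys.length v ≤ n := by omega
    exact add_nonneg (smul_nonneg hX (ih v i hlv hvi)) (smul_nonneg hY (ih v j hlv hvj))

lemma psirep_pos {w : s.cox.Group} {i : I} (h : ¬s.csys.IsRightDescent w i) :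
    (0 : I → ℝ) ≤ s.psirep w (del i) :=
  s.psirep_pos_aux (s.csys.length w) w i le_rfl h

lemma tau_del_self (i : I) : s.tau i (del i) = -del i := by
  rw [tau_apply, cf_del, A_diag]
  module

lemma psirep_neg {w : s.cox.Group} {i : I} (h : s.csys.IsRightDescent w i) :
    s.psirep w (del i) ≤ 0 := by
  have hkey : s.psirep w (del i) = -(s.psirep (w * s.csys.simple i) (del i)) := by
    conv_lhs => rw [← s.csys.simple_mul_simple_cancel_right (w := w) i]
    rw [map_mul, mulF_apply, psirep_simple, tau_del_self, map_neg]
  rw [hkey]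
  have := s.psirep_pos (s.csys.isRightDescent_iff_not_isRightDescent_mul.mp h)
  intro k
  simpa using this k

lemma psirep_dichotomy (w : s.cox.Group) (i : I) :
    (0 : I → ℝ) ≤ s.psirep w (del i) ∨ s.psirep w (del i) ≤ 0 := by
  by_cases h : s.csys.IsRightDescent w i
  · exact Or.inr (s.psirep_neg h)
  · exact Or.inl (s.psirep_pos h)

end
end GCMRep


set_option linter.unusedSectionVars false

namespace GCMRep

variable {I V : Type*} [Fintype I] [AddCommGroup V] [Module ℝ V] (s : GCMRep I V)

noncomputable section
open Classical

/-- the orbit of the standard basis vectors: abstract coroots -/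
def corootOrbit : Set (I → ℝ) := {x | ∃ w k, x = s.psirep w (del k)}

lemma corootOrbit_dichotomy {x : I → ℝ} (hx : x ∈ s.corootOrbit) :
    (0 : I → ℝ) ≤ x ∨ x ≤ 0 := by
  obtain ⟨w, k, rfl⟩ := hx
  exact s.psirep_dichotomy w k

lemma corootOrbit_ne_zero {x : I → ℝ} (hx : x ∈ s.corootOrbit) : x ≠ 0 := by
  obtain ⟨w, k, rfl⟩ := hx
  intro h
  have h2 : (s.psirep w).symm (s.psirep w (del k)) = (s.psirep w).symm 0 := by rw [h]
  rw [(s.psirep w).symm_apply_apply, map_zero] at h2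
  have := congrFun h2 k
  rw [del_apply_self] at this
  norm_num at this

lemma corootOrbit_tau {x : I → ℝ} (hx : x ∈ s.corootOrbit) (i : I) :
    s.tau i x ∈ s.corootOrbit := by
  obtain ⟨w, k, rfl⟩ := hx
  exact ⟨s.csys.simple i * w, k, by rw [map_mul, mulF_apply, psirep_simple]⟩

lemma corootOrbit_integral {x : I → ℝ} (hx : x ∈ s.corootOrbit) : IsIntegral x := by
  obtain ⟨w, k, rfl⟩ := hx
  exact s.isIntegral_psirep w _ (isIntegral_del k)

/-- the set of positive abstract coroots -/
def posC : Set (I → ℝ) := {x | x ∈ s.corootOrbit ∧ 0 ≤ x}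

lemma tau_apply_ne {i k : I} (h : k ≠ i) (x : I → ℝ) : s.tau i x k = x k := by
  rw [tau_apply]
  simp only [Pi.sub_apply, Pi.smul_apply, smul_eq_mul, del_apply_ne h, mul_zero, sub_zero]

lemma tau_invol (i : I) (x : I → ℝ) : s.tau i (s.tau i x) = x := s.tauMap_involutive i x

/-- positive coroots not supported on the `i`-ray stay positive under `tau i` -/
lemma tau_posC {x : I → ℝ} (hx : x ∈ s.posC) {i k : I} (hk : k ≠ i) (hxk : x k ≠ 0) :
    s.tau i x ∈ s.posC := by
  have horb := s.corootOrbit_tau hx.1 i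
  refine ⟨horb, ?_⟩
  rcases s.corootOrbit_dichotomy horb with h | h
  · exact h
  · exfalso
    have h1 := h k
    rw [s.tau_apply_ne hk] at h1
    have h2 := hx.2 k
    exact hxk (le_antisymm h1 h2)

/-- a positive coroot supported on the `i`-ray is `δ i` or `2 δ i` -/
lemma posC_ray {x : I → ℝ} (hx : x ∈ s.posC) {i : I} (hall : ∀ k, k ≠ i → x k = 0) :
    x = del i ∨ x = (2:ℝ) • del i := by
  have hxray : x = x i • del i := by
    funext k
    rcases eq_or_ne k i with rfl | h
    · simp only [Pi.smul_apply, del_apply_self, smul_eq_mul, mul_one]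
    · rw [hall k h]
      simp only [Pi.smul_apply, del_apply_ne h, smul_eq_mul, mul_zero]
  obtain ⟨w, k, hwk⟩ := hx.1
  -- the invariant pairing with the corresponding root
  have hpair : s.cT x (s.glrep w (s.α k)) = 2 := by
    rw [hwk, s.interT w (del k) (s.α k), cT_del]
    exact s.diag k
  have hr : s.cT x (s.glrep w (s.α k)) = x i * s.cT (del i) (s.glrep w (s.α k)) := by
    conv_lhs => rw [hxray]
    rw [map_smul]
    rfl
  -- the value of the pairing against `del i` is an integer
  have hy : s.cT (del i) (s.glrep w (s.α k)) = s.cf k (s.psirep w⁻¹ (del i)) := by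
    rw [s.cT_glrep, cT_alpha]
  obtain ⟨mz, hmz⟩ := s.isIntegral_cf (s.isIntegral_psirep w⁻¹ _ (isIntegral_del i)) k
  obtain ⟨cz, hcz⟩ := s.corootOrbit_integral hx.1 i
  have hprod : (cz : ℝ) * (mz : ℝ) = 2 := by
    rw [← hcz, ← hmz, ← hy, ← hr]
    exact hpair
  have hprodz : cz * mz = 2 := by exact_mod_cast hprod
  have hczpos : 0 < cz := by
    rcases lt_or_ge 0 cz with h | h
    · exact h
    · exfalso
      have hxi0 : x i = 0 ∨ 0 < x i := by
        rcases eq_or_lt_of_le (hx.2 i) with h' | h'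
        · exact Or.inl h'.symm
        · exact Or.inr h'
      rcases hxi0 with h' | h'
      · exact s.corootOrbit_ne_zero hx.1 (by rw [hxray, h', zero_smul])
      · have : (0:ℝ) < (cz:ℝ) := hcz ▸ h'
        have : (0:ℤ) < cz := by exact_mod_cast this
        omega
  have hdvd : cz ∣ 2 := ⟨mz, hprodz.symm⟩
  have hcz2 : cz ≤ 2 := Int.le_of_dvd (by norm_num) hdvd
  interval_cases cz
  · left
    rw [hxray, hcz]
    norm_num
  · right
    rw [hxray, hcz]
    norm_num

/-- pairing a nonnegative coroot vector against a dominant vector is nonnegative -/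
lemma cT_nonneg {x : I → ℝ} (hx : (0:I→ℝ) ≤ x) {v : V} (hv : v ∈ s.domChamber) :
    0 ≤ s.cT x v := by
  rw [cT_apply]
  exact Finset.sum_nonneg fun j _ => mul_nonneg (hx j) (hv j)

/-- the set of positive coroots negative on `v` -/
def negOn (v : V) : Set (I → ℝ) := {x | x ∈ s.posC ∧ s.cT x v < 0}

/-- finiteness of inversion-type sets -/
lemma finite_negSet (n : ℕ) : ∀ w : s.cox.Group, s.csys.length w ≤ n →
    {x | x ∈ s.posC ∧ ¬((0:I→ℝ) ≤ s.psirep w⁻¹ x)}.Finite := by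
  induction n with
  | zero =>
    intro w hl
    have hw1 : w = 1 := s.csys.length_eq_zero_iff.mp (Nat.le_antisymm hl (Nat.zero_le _))
    subst hw1
    convert Set.finite_empty
    ext x
    simp only [Set.mem_setOf_eq, Set.mem_empty_iff_false, iff_false, not_and]
    intro hx h
    rw [inv_one, map_one, oneF_apply] at h
    exact h hx.2
  | succ n ih =>
    intro w hl
    by_cases hw1 : w = 1
    · subst hw1
      convert Set.finite_empty
      ext x
      simp only [Set.mem_setOf_eq, Set.mem_empty_iff_false, iff_false, not_and]
      intro hx h
      rw [inv_one, map_one, oneF_apply] at h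
      exact h hx.2
    obtain ⟨i, hdi⟩ := s.csys.exists_leftDescent_of_ne_one hw1
    set u := s.csys.simple i * w with hu
    have hlu : s.csys.length u ≤ n := by
      have h1 : s.csys.length (s.csys.simple i * w) < s.csys.length w := hdi
      have h2 : s.csys.length u = s.csys.length (s.csys.simple i * w) := rfl
      omega
    have hw : w = s.csys.simple i * u := by
      rw [hu, s.csys.simple_mul_simple_cancel_left]
    have hsub : {x | x ∈ s.posC ∧ ¬((0:I→ℝ) ≤ s.psirep w⁻¹ x)} ⊆
        (s.tau i '' {x | x ∈ s.posC ∧ ¬((0:I→ℝ) ≤ s.psirep u⁻¹ x)}) ∪ {del i, (2:ℝ) • del i} := by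
      rintro x ⟨hxp, hxn⟩
      by_cases hray : ∀ k, k ≠ i → x k = 0
      · right
        rcases s.posC_ray hxp hray with h | h
        · exact Or.inl h
        · exact Or.inr h
      · left
        push_neg at hray
        obtain ⟨k, hk, hxk⟩ := hray
        have htx := s.tau_posC hxp hk hxk
        refine ⟨s.tau i x, ⟨htx, ?_⟩, s.tau_invol i x⟩
        intro hcon
        apply hxn
        have : s.psirep w⁻¹ x = s.psirep u⁻¹ (s.tau i x) := by
          rw [hw, mul_inv_rev, map_mul, mulF_apply, s.csys.inv_simple, psirep_simple]
        rw [this]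
        exact hcon
    refine Set.Finite.subset (Set.Finite.union ((ih u hlu).image _) ?_) hsub
    exact (Set.finite_singleton _).insert _

end
end GCMRep


set_option linter.unusedSectionVars false

namespace GCMRep

variable {I V : Type*} [Fintype I] [AddCommGroup V] [Module ℝ V] (s : GCMRep I V)

noncomputable section
open Classical

lemma weyl_eq_range : s.weyl = s.glrep.range := by
  rw [MonoidHom.range_eq_map, ← s.csys.subgroup_closure_range_simple,
    MonoidHom.map_closure]
  unfold weyl
  congr 1
  rw [← Set.range_comp]
  have : ⇑s.glrep ∘ s.csys.simple = s.reflE := funext fun i => s.glrep_simple i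
  rw [this]

lemma mem_titsCone_iff {v : V} :
    v ∈ s.titsCone ↔ ∃ (w : s.cox.Group) (x : V), x ∈ s.domChamber ∧ v = s.glrep w x := by
  constructor
  · rintro ⟨W, hW, x, hx, rfl⟩
    rw [weyl_eq_range] at hW
    obtain ⟨w, rfl⟩ := hW
    exact ⟨w, x, hx, rfl⟩
  · rintro ⟨w, x, hx, rfl⟩
    refine ⟨s.glrep w, ?_, x, hx, rfl⟩
    rw [weyl_eq_range]
    exact ⟨w, rfl⟩

lemma reflE_mem_titsCone {v : V} (hv : v ∈ s.titsCone) (i : I) :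
    s.reflE i v ∈ s.titsCone := by
  rw [mem_titsCone_iff] at hv ⊢
  obtain ⟨w, x, hx, rfl⟩ := hv
  exact ⟨s.csys.simple i * w, x, hx, by rw [map_mul, mulE_apply, glrep_simple]⟩

/-- direction (a) : Tits cone elements have finitely many negative positive-coroots -/
lemma finite_negOn_of_mem {v : V} (hv : v ∈ s.titsCone) : (s.negOn v).Finite := by
  rw [mem_titsCone_iff] at hv
  obtain ⟨w, x, hx, rfl⟩ := hv
  refine Set.Finite.subset (s.finite_negSet (s.csys.length w) w le_rfl) ?_
  rintro y ⟨hyp, hyn⟩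
  refine ⟨hyp, ?_⟩
  intro hcon
  rw [s.cT_glrep] at hyn
  exact absurd (s.cT_nonneg hcon hx) (not_le.mpr hyn)

lemma coroot_reflE_self (i : I) (v : V) : s.coroot i (s.reflE i v) = -s.coroot i v := by
  rw [reflE_apply, map_sub, map_smul, smul_eq_mul, s.diag i]
  ring

lemma del_mem_posC (i : I) : del i ∈ s.posC :=
  ⟨⟨1, i, by rw [map_one, oneF_apply]⟩, del_nonneg i⟩

/-- direction (b) : finitely many negatives implies membership -/
lemma mem_of_finite_negOn (n : ℕ) : ∀ v : V, (s.negOn v).Finite → (s.negOn v).ncard ≤ n →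
    v ∈ s.titsCone := by
  induction n with
  | zero =>
    intro v hfin hcard
    by_cases hC : v ∈ s.domChamber
    · exact s.mem_titsCone_iff.mpr ⟨1, v, hC, by rw [map_one, oneE_apply]⟩
    · exfalso
      unfold domChamber at hC
      simp only [Set.mem_setOf_eq, not_forall, not_le] at hC
      obtain ⟨i, hi⟩ := hC
      have hmem : del i ∈ s.negOn v := ⟨s.del_mem_posC i, by rw [cT_del]; exact hi⟩
      have : (s.negOn v).ncard = 0 := Nat.le_antisymm hcard (Nat.zero_le _)
      rw [Set.ncard_eq_zero hfin] at this
      rw [this] at hmem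
      exact hmem
  | succ n ih =>
    intro v hfin hcard
    by_cases hC : v ∈ s.domChamber
    · exact s.mem_titsCone_iff.mpr ⟨1, v, hC, by rw [map_one, oneE_apply]⟩
    unfold domChamber at hC
    simp only [Set.mem_setOf_eq, not_forall, not_le] at hC
    obtain ⟨i, hi⟩ := hC
    have hmem : del i ∈ s.negOn v := ⟨s.del_mem_posC i, by rw [cT_del]; exact hi⟩
    set v' := s.reflE i v with hv'
    have hsub : s.negOn v' ⊆ s.tau i '' (s.negOn v \ {del i}) := by
      rintro x ⟨hxp, hxn⟩
      have hxv : s.cT (s.tau i x) v < 0 := by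
        rw [cT_tau]
        exact hxn
      have hray : ¬ (∀ k, k ≠ i → x k = 0) := by
        intro hall
        rcases s.posC_ray hxp hall with h | h
        · rw [h, cT_del, hv', coroot_reflE_self] at hxn
          linarith
        · rw [h, map_smul, LinearMap.smul_apply, smul_eq_mul, cT_del, hv', coroot_reflE_self] at hxn
          linarith
      push_neg at hray
      obtain ⟨k, hk, hxk⟩ := hray
      have htx := s.tau_posC hxp hk hxk
      refine ⟨s.tau i x, ⟨⟨htx, hxv⟩, ?_⟩, s.tau_invol i x⟩
      intro hcon
      rw [Set.mem_singleton_iff] at hcon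
      have hxe : x = s.tau i (del i) := by rw [← hcon, tau_invol]
      rw [tau_del_self] at hxe
      have := hxp.2 i
      rw [hxe] at this
      rw [show (-del i) i = -1 by rw [Pi.neg_apply, del_apply_self]] at this
      have h0 : ((0:I→ℝ)) i = 0 := rfl
      rw [h0] at this
      linarith
    have hinj : Function.Injective (s.tau i) := (s.tau i).injective
    have hfin' : (s.negOn v').Finite :=
      Set.Finite.subset (Set.Finite.image _ hfin.diff) hsub
    have hcard' : (s.negOn v').ncard ≤ n := by
      have h1 : (s.negOn v').ncard ≤ (s.tau i '' (s.negOn v \ {del i})).ncard :=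
        Set.ncard_le_ncard hsub (hfin.diff.image _)
      have h2 : (s.tau i '' (s.negOn v \ {del i})).ncard = (s.negOn v \ {del i}).ncard :=
        Set.ncard_image_of_injective _ hinj
      have h3 : (s.negOn v \ {del i}).ncard = (s.negOn v).ncard - 1 :=
        Set.ncard_diff_singleton_of_mem hmem
      have h4 : 1 ≤ (s.negOn v).ncard := by
        have : (s.negOn v).Nonempty := ⟨_, hmem⟩
        have h5 : (s.negOn v).ncard ≠ 0 := by
          rw [Ne, Set.ncard_eq_zero hfin]
          exact fun he => by rw [he] at hmem; exact hmem
        omega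
      omega
    have hv'mem := ih v' hfin' hcard'
    have : v = s.reflE i v' := (s.reflMap_involutive i v).symm
    rw [this]
    exact s.reflE_mem_titsCone hv'mem i

/-- The characterization of the Tits cone -/
lemma mem_titsCone_iff_finite {v : V} : v ∈ s.titsCone ↔ (s.negOn v).Finite := by
  constructor
  · exact s.finite_negOn_of_mem
  · intro h
    exact s.mem_of_finite_negOn (s.negOn v).ncard v h le_rfl

lemma add_mem_titsCone {x y : V} (hx : x ∈ s.titsCone) (hy : y ∈ s.titsCone) :
    x + y ∈ s.titsCone := by
  rw [mem_titsCone_iff_finite] at hx hy ⊢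
  refine Set.Finite.subset (hx.union hy) ?_
  rintro z ⟨hzp, hzn⟩
  rw [map_add] at hzn
  by_contra hcon
  simp only [Set.mem_union, negOn, Set.mem_setOf_eq, not_or, not_and, not_lt] at hcon
  have h1 := hcon.1 hzp
  have h2 := hcon.2 hzp
  linarith

lemma smul_mem_titsCone {c : ℝ} (hc : 0 ≤ c) {x : V} (hx : x ∈ s.titsCone) :
    c • x ∈ s.titsCone := by
  rcases eq_or_lt_of_le hc with rfl | hc
  · rw [zero_smul]
    exact s.mem_titsCone_iff.mpr ⟨1, 0, fun i => by rw [map_zero], by rw [map_one, oneE_apply]⟩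
  rw [mem_titsCone_iff_finite] at hx ⊢
  refine Set.Finite.subset hx ?_
  rintro z ⟨hzp, hzn⟩
  rw [map_smul, smul_eq_mul] at hzn
  refine ⟨hzp, ?_⟩
  nlinarith

end
end GCMRep



/-- The Tits cone `Y = W · C` is a convex cone; in particular it is closed under addition
and under multiplication by nonnegative scalars. -/
theorem titsCone_convexCone
    {I V : Type*} [Fintype I] [AddCommGroup V] [Module ℝ V] (s : GCMRep I V) :
    Convex ℝ s.titsCone ∧
    (∀ x ∈ s.titsCone, ∀ y ∈ s.titsCone, x + y ∈ s.titsCone) ∧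
    (∀ c : ℝ, 0 ≤ c → ∀ x ∈ s.titsCone, c • x ∈ s.titsCone) := by
  refine ⟨?_, fun x hx y hy => s.add_mem_titsCone hx hy,
    fun c hc x hx => s.smul_mem_titsCone hc hx⟩
  intro x hx y hy a b ha hb hab
  exact s.add_mem_titsCone (s.smul_mem_titsCone ha hx) (s.smul_mem_titsCone hb hy)
end
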